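/- arXiv:1911.01694 — 5 statements merged into one kernel-verified Lean document; each statement's English description precedes it below -/
import Mathlib

section
/- For every real x > 0, x · ln(1/(1−e^{−x})) ≤ (ln 2)², with equality if and only if x = ln 2. -/
open Real Set

noncomputable def psiAux (t : ℝ) : ℝ := (1 - t) * Real.log (1 - t) - t * Real.log t

lemma psiAux_hasDeriv {t : ℝ} (ht0 : t ≠ 0) (ht1 : t ≠ 1) :
    HasDerivAt psiAux (-Real.log (1 - t) - Real.log t - 2) t := by
  have h1t : (1 : ℝ) - t ≠ 0 := by intro h; apply ht1; linarith
  have hinner : HasDerivAt (fun s : ℝ => 1 - s) (-1 : ℝ) t := by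
    simpa using (hasDerivAt_id' t).const_sub (1 : ℝ)
  have h1 : HasDerivAt (fun s : ℝ => (1 - s) * Real.log (1 - s))
      ((Real.log (1 - t) + 1) * (-1)) t :=
    (Real.hasDerivAt_mul_log h1t).comp t hinner
  have h2 : HasDerivAt (fun s : ℝ => s * Real.log s) (Real.log t + 1) t :=
    Real.hasDerivAt_mul_log ht0
  have := h1.sub h2
  refine this.congr_deriv ?_
  ring

lemma psiAux_deriv_eq {t : ℝ} (ht : t ∈ Ioo (0:ℝ) 1) :
    deriv psiAux t = -Real.log (1 - t) - Real.log t - 2 :=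
  (psiAux_hasDeriv ht.1.ne' (ne_of_lt ht.2)).deriv

lemma psiAux_concave : StrictConcaveOn ℝ (Icc (0:ℝ) (1/2)) psiAux := by
  apply strictConcaveOn_of_deriv2_neg (convex_Icc _ _)
  · exact ((Real.continuous_mul_log.comp (continuous_const.sub continuous_id)).sub
      Real.continuous_mul_log).continuousOn
  · intro t ht
    rw [interior_Icc] at ht
    have ht0 : 0 < t := ht.1
    have ht1 : t < 1/2 := ht.2
    have h1t : (0:ℝ) < 1 - t := by linarith
    have hmem : t ∈ Ioo (0:ℝ) 1 := ⟨ht0, by linarith⟩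
    have hev : deriv psiAux =ᶠ[nhds t] fun s => -Real.log (1 - s) - Real.log s - 2 := by
      filter_upwards [isOpen_Ioo.mem_nhds hmem] with s hs
      exact psiAux_deriv_eq hs
    have hder : HasDerivAt (fun s : ℝ => -Real.log (1 - s) - Real.log s - 2)
        (1 / (1 - t) - 1 / t) t := by
      have hinner : HasDerivAt (fun s : ℝ => 1 - s) (-1 : ℝ) t := by
        simpa using (hasDerivAt_id' t).const_sub (1 : ℝ)
      have hA : HasDerivAt (fun s : ℝ => Real.log (1 - s)) ((1-t)⁻¹ * (-1)) t :=
        (Real.hasDerivAt_log h1t.ne').comp t hinner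
      have := (hA.neg.sub (Real.hasDerivAt_log ht0.ne')).sub_const 2
      refine this.congr_deriv ?_
      field_simp
    have : deriv^[2] psiAux t = 1 / (1 - t) - 1 / t := by
      simp only [Function.iterate_succ, Function.iterate_zero, Function.comp_apply, id]
      rw [hev.deriv_eq]
      exact hder.deriv
    rw [this]
    rw [div_sub_div _ _ h1t.ne' ht0.ne']
    apply div_neg_of_neg_of_pos
    · linarith
    · positivity

lemma psiAux_pos {t : ℝ} (ht : t ∈ Ioo (0:ℝ) (1/2)) : 0 < psiAux t := by
  have h0 : (0:ℝ) ∈ Icc (0:ℝ) (1/2) := by norm_num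
  have h2 : (1/2 : ℝ) ∈ Icc (0:ℝ) (1/2) := by norm_num
  have ha : (0:ℝ) < 1 - 2*t := by have := ht.2; linarith
  have hb : (0:ℝ) < 2*t := by have := ht.1; linarith
  have := psiAux_concave.2 h0 h2 (by norm_num) ha hb (by ring)
  have hψ0 : psiAux 0 = 0 := by simp [psiAux]
  have hψh : psiAux (1/2) = 0 := by
    have : (1:ℝ) - 1/2 = 1/2 := by norm_num
    simp only [psiAux, this]
    ring
  have harg : (1 - 2*t) • (0:ℝ) + (2*t) • (1/2 : ℝ) = t := by
    simp [smul_eq_mul]; ring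
  rw [harg, hψ0, hψh] at this
  simpa using this

lemma psiAux_neg {t : ℝ} (ht : t ∈ Ioo (1/2 : ℝ) 1) : psiAux t < 0 := by
  have h : psiAux t = -psiAux (1 - t) := by
    simp only [psiAux]
    ring_nf
  rw [h]
  have : (1 - t) ∈ Ioo (0:ℝ) (1/2) := ⟨by linarith [ht.2], by linarith [ht.1]⟩
  linarith [psiAux_pos this]

noncomputable def Faux (t : ℝ) : ℝ := Real.log t * Real.log (1 - t)

lemma Faux_hasDeriv {t : ℝ} (ht : t ∈ Ioo (0:ℝ) 1) :
    HasDerivAt Faux (psiAux t / (t * (1 - t))) t := by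
  have ht0 : 0 < t := ht.1
  have h1t : (0:ℝ) < 1 - t := by linarith [ht.2]
  have hinner : HasDerivAt (fun s : ℝ => 1 - s) (-1 : ℝ) t := by
    simpa using (hasDerivAt_id' t).const_sub (1 : ℝ)
  have hA : HasDerivAt (fun s : ℝ => Real.log (1 - s)) ((1-t)⁻¹ * (-1)) t :=
    (Real.hasDerivAt_log h1t.ne').comp t hinner
  have := (Real.hasDerivAt_log ht0.ne').mul hA
  refine this.congr_deriv ?_
  simp only [psiAux]
  field_simp
  ring

lemma Faux_contOn {s : Set ℝ} (hs : ∀ t ∈ s, 0 < t ∧ t < 1) : ContinuousOn Faux s := by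
  intro t ht
  have h1 : t ≠ 0 := (hs t ht).1.ne'
  have h2 : (1:ℝ) - t ≠ 0 := by have := (hs t ht).2; intro h; linarith
  exact ((Real.continuousAt_log h1).mul
    ((Real.continuousAt_log h2).comp (continuousAt_const.sub continuousAt_id))).continuousWithinAt

lemma Faux_mono : StrictMonoOn Faux (Ioc (0:ℝ) (1/2)) := by
  apply strictMonoOn_of_deriv_pos (convex_Ioc _ _)
  · exact Faux_contOn (fun t ht => ⟨ht.1, by have := ht.2; linarith⟩)
  · intro t ht
    rw [interior_Ioc] at ht
    have hmem : t ∈ Ioo (0:ℝ) 1 := ⟨ht.1, by have := ht.2; linarith⟩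
    rw [(Faux_hasDeriv hmem).deriv]
    apply div_pos (psiAux_pos ht)
    have := ht.1; have := ht.2
    have : (0:ℝ) < 1 - t := by linarith
    positivity

lemma Faux_anti : StrictAntiOn Faux (Ico (1/2 : ℝ) 1) := by
  apply strictAntiOn_of_deriv_neg (convex_Ico _ _)
  · exact Faux_contOn (fun t ht => ⟨by have := ht.1; linarith, ht.2⟩)
  · intro t ht
    rw [interior_Ico] at ht
    have hmem : t ∈ Ioo (0:ℝ) 1 := ⟨by have := ht.1; linarith, ht.2⟩
    rw [(Faux_hasDeriv hmem).deriv]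
    apply div_neg_of_neg_of_pos (psiAux_neg ht)
    have := ht.1; have := ht.2
    have h0 : (0:ℝ) < t := by linarith
    have : (0:ℝ) < 1 - t := by linarith
    positivity

lemma Faux_half : Faux (1/2) = (Real.log 2)^2 := by
  have h : Real.log (1/2 : ℝ) = -Real.log 2 := by rw [one_div, Real.log_inv]
  have h' : (1:ℝ) - 1/2 = 1/2 := by norm_num
  simp only [Faux, h', h]
  ring

lemma Faux_key {t : ℝ} (ht : t ∈ Ioo (0:ℝ) 1) :
    Faux t ≤ (Real.log 2)^2 ∧ (Faux t = (Real.log 2)^2 ↔ t = 1/2) := by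
  rcases lt_trichotomy t (1/2) with h | h | h
  · have hlt : Faux t < Faux (1/2) :=
      Faux_mono ⟨ht.1, h.le⟩ (by norm_num) h
    rw [Faux_half] at hlt
    exact ⟨hlt.le, by constructor <;> intro hh <;> [exact absurd hh hlt.ne; exact absurd hh h.ne]⟩
  · subst h
    rw [Faux_half]
    norm_num
  · have hlt : Faux t < Faux (1/2) :=
      Faux_anti (by norm_num) ⟨h.le, ht.2⟩ h
    rw [Faux_half] at hlt
    exact ⟨hlt.le, by constructor <;> intro hh <;> [exact absurd hh hlt.ne; exact absurd hh h.ne']⟩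

theorem xln_inequality (x : ℝ) (hx : 0 < x) :
    x * Real.log (1 / (1 - Real.exp (-x))) ≤ (Real.log 2) ^ 2 ∧
    (x * Real.log (1 / (1 - Real.exp (-x))) = (Real.log 2) ^ 2 ↔ x = Real.log 2) := by
  set t := Real.exp (-x) with htdef
  have ht0 : 0 < t := Real.exp_pos _
  have ht1 : t < 1 := by
    rw [htdef]
    calc Real.exp (-x) < Real.exp 0 := Real.exp_lt_exp.mpr (by linarith)
    _ = 1 := Real.exp_zero
  have hlogt : Real.log t = -x := by rw [htdef, Real.log_exp]
  have heq : x * Real.log (1 / (1 - t)) = Faux t := by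
    rw [one_div, Real.log_inv, Faux, hlogt]
    ring
  have hkey := Faux_key (t := t) ⟨ht0, ht1⟩
  rw [heq]
  refine ⟨hkey.1, hkey.2.trans ?_⟩
  constructor
  · intro h
    have : Real.log t = Real.log (1/2) := by rw [h]
    rw [hlogt, one_div, Real.log_inv] at this
    linarith
  · intro h
    have : t = Real.exp (-Real.log 2) := by rw [htdef, h]
    rw [this, Real.exp_neg, Real.exp_log (by norm_num : (0:ℝ) < 2)]
    norm_num
end

section
/- Let q, d, m', n be positive integers with 2 ≤ d ≤ q and n > d, and let δ ∈ (0,1). Set λ = √((2·q^d/m')·ln(2·q^d/δ)) and assume λ < 1 and m' ≥ ln(2n/δ)/((1−λ)·(−ln P_{q,d})). Let M' be an m'×n matrix with entries chosen independently and uniformly at random from [q] = {1,…,q}. Then with probability at least 1 − δ, for every column j ∈ {d+1,…,n} there exists a row i ∈ {1,…,m'} with M'_{i,j} ∉ {M'_{i,1},…,M'_{i,d}} (that is, the associated binary q-transversal test matrix is (n,{1,…,d})-disjunct). -/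
open scoped Classical

noncomputable section

def Rqd (q d i : ℕ) : ℕ :=
  (Finset.univ.filter
    (fun v : Fin d → Fin q => (Finset.image v Finset.univ).card = i)).card

def Pqd (q d : ℕ) : ℝ :=
  (∏ i ∈ Finset.Icc 1 d, ((i : ℝ) / q) ^ Rqd q d i) ^ (((q : ℝ) ^ d)⁻¹)

lemma expNegLe {x : ℝ} (hx : 0 ≤ x) : Real.exp (-x) ≤ 1 - x + (3/4)*x^2 := by
  have h1 : 1 + x/2 ≤ Real.exp (x/2) := by
    have := Real.add_one_le_exp (x/2); linarith
  have h2 : (1 + x/2)^2 ≤ Real.exp x := by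
    calc (1 + x/2)^2 ≤ (Real.exp (x/2))^2 := by
          apply pow_le_pow_left₀ (by linarith) h1
      _ = Real.exp x := by
          rw [← Real.exp_nat_mul]; norm_num; ring_nf
  have h3 : Real.exp (-x) * Real.exp x = 1 := by
    rw [← Real.exp_add]; simp
  nlinarith [Real.exp_pos x, Real.exp_pos (-x), mul_le_mul_of_nonneg_left h2 (Real.exp_pos (-x)).le]

set_option maxHeartbeats 1000000 in
lemma chernoff (q d m' : ℕ) (hq2 : 2 ≤ q) (hm'1 : 1 ≤ m') (δ lam : ℝ)
    (hδ0 : 0 < δ) (hδ1 : δ < 1)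
    (Y : (Fin d → Fin q) → ℝ) (hY0 : ∀ v, 0 ≤ Y v) (hYR : ∀ v, Y v ≤ Real.log q)
    (hsumY : (q:ℝ) * Real.log q ≤ ∑ v, Y v)
    (hlam0 : 0 ≤ lam) (hlam1 : lam < 1)
    (hlamsq : (m':ℝ) * lam^2 = 2*(q:ℝ)^d * Real.log (2*(q:ℝ)^d/δ)) :
    ((Finset.univ.filter fun a : Fin m' → Fin d → Fin q =>
      ¬ ((1-lam)*(m':ℝ)*((∑ v, Y v)/(q:ℝ)^d) ≤ ∑ i, Y (a i))).card : ℝ)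
      ≤ δ/2 * (q:ℝ)^(m'*d) := by
  have hq1R : (1:ℝ) < q := by exact_mod_cast hq2.trans_lt' one_lt_two
  have hq0 : (0:ℝ) < q := by linarith
  have hR : 0 < Real.log q := Real.log_pos hq1R
  set R := Real.log q with hRdef
  have hqd0 : (0:ℝ) < (q:ℝ)^d := by positivity
  have hqd1 : (1:ℝ) ≤ (q:ℝ)^d := one_le_pow₀ hq1R.le
  set μ := (∑ v, Y v)/(q:ℝ)^d with hμdef
  have hsum' : (q:ℝ)^d * μ = ∑ v, Y v := by
    rw [hμdef]; field_simp
  have hμ0 : 0 < μ := div_pos (lt_of_lt_of_le (by positivity) hsumY) hqd0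
  set t := lam / R with htdef
  have ht0 : 0 ≤ t := div_nonneg hlam0 hR.le
  set c := 1 - Real.exp (-lam) with hcdef
  have hc : lam - (3/4)*lam^2 ≤ c := by
    have := expNegLe hlam0; rw [hcdef]; nlinarith
  clear_value R μ t c
  -- pointwise chord bound
  have hchord : ∀ v, Real.exp (-(t * Y v)) ≤ 1 - c * (Y v / R) := by
    intro v
    have hθ0 : 0 ≤ Y v / R := div_nonneg (hY0 v) hR.le
    have hθ1 : Y v / R ≤ 1 := (div_le_one hR).2 (hYR v)
    have hcx := convexOn_exp.2 (Set.mem_univ (-lam)) (Set.mem_univ 0)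
        hθ0 (by linarith : (0:ℝ) ≤ 1 - Y v / R)
        (by ring : Y v / R + (1 - Y v / R) = 1)
    simp only [smul_eq_mul, mul_zero, add_zero, Real.exp_zero, mul_one] at hcx
    have harg : (Y v / R) * (-lam) = -(t * Y v) := by
      rw [htdef]; ring
    rw [harg] at hcx
    rw [hcdef]
    linarith [hcx]
  -- sum bound
  have hsumexp : ∑ v, Real.exp (-(t * Y v)) ≤ (q:ℝ)^d * Real.exp (-(c * μ / R)) := by
    have hcardV : (Fintype.card (Fin d → Fin q) : ℝ) = (q:ℝ)^d := by
      simp [Fintype.card_fun]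
    calc ∑ v, Real.exp (-(t * Y v)) ≤ ∑ v, (1 - c * (Y v / R)) :=
          Finset.sum_le_sum (fun v _ => hchord v)
      _ = (q:ℝ)^d - (c/R) * ∑ v, Y v := by
          rw [Finset.sum_sub_distrib, Finset.sum_const, Finset.card_univ, nsmul_eq_mul,
            mul_one, hcardV,
            Finset.sum_congr rfl (fun v _ => by ring_nf :
              ∀ v ∈ Finset.univ, c * (Y v / R) = (c/R) * Y v), ← Finset.mul_sum]
      _ = (q:ℝ)^d * (1 - c*μ/R) := by
          rw [← hsum']; field_simp
      _ ≤ (q:ℝ)^d * Real.exp (-(c * μ / R)) := by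
          apply mul_le_mul_of_nonneg_left _ hqd0.le
          have := Real.add_one_le_exp (-(c*μ/R)); linarith
  -- Chernoff chain
  set B := (1-lam)*(m':ℝ)*μ with hBdef
  have hstep1 : ((Finset.univ.filter fun a : Fin m' → Fin d → Fin q =>
      ¬ (B ≤ ∑ i, Y (a i))).card : ℝ)
      ≤ Real.exp (t*B) * (∑ v, Real.exp (-(t * Y v)))^(m') := by
    calc ((Finset.univ.filter fun a : Fin m' → Fin d → Fin q =>
          ¬ (B ≤ ∑ i, Y (a i))).card : ℝ)
        = ∑ a ∈ (Finset.univ.filter fun a : Fin m' → Fin d → Fin q =>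
            ¬ (B ≤ ∑ i, Y (a i))), (1:ℝ) := by
          rw [Finset.sum_const, nsmul_eq_mul, mul_one]
      _ ≤ ∑ a ∈ (Finset.univ.filter fun a : Fin m' → Fin d → Fin q =>
            ¬ (B ≤ ∑ i, Y (a i))), Real.exp (t * (B - ∑ i, Y (a i))) := by
          apply Finset.sum_le_sum
          intro a ha
          rw [Finset.mem_filter] at ha
          have h4 : 0 ≤ t * (B - ∑ i, Y (a i)) :=
            mul_nonneg ht0 (by push_neg at ha; linarith [ha.2])
          linarith [Real.add_one_le_exp (t * (B - ∑ i, Y (a i)))]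
      _ ≤ ∑ a : Fin m' → Fin d → Fin q, Real.exp (t * (B - ∑ i, Y (a i))) :=
          Finset.sum_le_sum_of_subset_of_nonneg (Finset.filter_subset _ _)
            (fun a _ _ => (Real.exp_pos _).le)
      _ = ∑ a : Fin m' → Fin d → Fin q,
            Real.exp (t*B) * ∏ i, Real.exp (-(t * Y (a i))) := by
          apply Finset.sum_congr rfl; intro a _
          rw [← Real.exp_sum, ← Real.exp_add]
          congr 1
          rw [Finset.sum_neg_distrib, ← Finset.mul_sum]
          ring
      _ = Real.exp (t*B) * ∑ a : Fin m' → Fin d → Fin q,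
            ∏ i, Real.exp (-(t * Y (a i))) := by rw [← Finset.mul_sum]
      _ = Real.exp (t*B) * (∑ v, Real.exp (-(t * Y v)))^(m') := by
          congr 1
          have h5 := Finset.prod_univ_sum (fun _ : Fin m' => (Finset.univ : Finset (Fin d → Fin q)))
            (fun _ v => Real.exp (-(t * Y v)))
          rw [Fintype.piFinset_univ] at h5
          rw [← h5, Finset.prod_const, Finset.card_univ, Fintype.card_fin]
  have hpow : (∑ v, Real.exp (-(t * Y v)))^(m') ≤ ((q:ℝ)^d * Real.exp (-(c * μ / R)))^(m') :=
    pow_le_pow_left₀ (Finset.sum_nonneg (fun v _ => (Real.exp_pos _).le)) hsumexp m'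
  -- final numeric bound
  set L := Real.log (2*(q:ℝ)^d/δ) with hLdef
  clear_value L
  have hL2 : Real.log (2/δ) ≤ L := by
    rw [hLdef]
    apply Real.log_le_log (by positivity)
    gcongr
    nlinarith
  have hL0 : 0 ≤ L := by
    have h6 : (0:ℝ) ≤ Real.log (2/δ) :=
      Real.log_nonneg (by rw [le_div_iff₀ hδ0]; linarith)
    linarith
  have hqμ : (q:ℝ)*R ≤ (q:ℝ)^d * μ := by rw [hsum']; exact hsumY
  have hkey : Real.log (2/δ) ≤ (m':ℝ)*lam^2*μ/(4*R) := by
    have h1 : (m':ℝ)*lam^2*μ = 2*(q:ℝ)^d*L*μ := by rw [hlamsq, hLdef]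
    have h2 : (q:ℝ)*R*L ≤ (q:ℝ)^d*μ*L := mul_le_mul_of_nonneg_right hqμ hL0
    rw [h1, le_div_iff₀ (by linarith : (0:ℝ) < 4*R)]
    have hq2R : (2:ℝ) ≤ q := by exact_mod_cast hq2
    have h7 : Real.log (2/δ) * R ≤ L * R := mul_le_mul_of_nonneg_right hL2 hR.le
    have h8 : 2*(R*L) ≤ (q:ℝ)*(R*L) := mul_le_mul_of_nonneg_right hq2R (mul_nonneg hR.le hL0)
    nlinarith [h2, h7, h8]
  have hexparg : t*B + (m':ℝ) * (-(c*μ/R)) ≤ -Real.log (2/δ) := by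
    have hfac : lam*(1-lam) - c ≤ -(lam^2/4) := by nlinarith [hc]
    have heq : t*B + (m':ℝ) * (-(c*μ/R)) = ((m':ℝ)*μ/R) * (lam*(1-lam) - c) := by
      rw [htdef, hBdef]; field_simp; ring
    have hpos : 0 ≤ (m':ℝ)*μ/R :=
      div_nonneg (mul_nonneg (Nat.cast_nonneg _) hμ0.le) hR.le
    have h3 : ((m':ℝ)*μ/R) * (lam*(1-lam) - c) ≤ ((m':ℝ)*μ/R) * (-(lam^2/4)) :=
      mul_le_mul_of_nonneg_left hfac hpos
    have h4 : ((m':ℝ)*μ/R) * (-(lam^2/4)) = -((m':ℝ)*lam^2*μ/(4*R)) := by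
      field_simp
    rw [heq]
    calc ((m':ℝ)*μ/R) * (lam*(1-lam) - c) ≤ ((m':ℝ)*μ/R) * (-(lam^2/4)) := h3
      _ = -((m':ℝ)*lam^2*μ/(4*R)) := h4
      _ ≤ -Real.log (2/δ) := by linarith [hkey]
  have hfinal : Real.exp (t*B) * ((q:ℝ)^d * Real.exp (-(c * μ / R)))^(m')
      ≤ δ/2 * (q:ℝ)^(m'*d) := by
    have hexp : Real.exp (t*B) * Real.exp (-(c*μ/R))^(m') ≤ δ/2 := by
      rw [← Real.exp_nat_mul, ← Real.exp_add]
      calc Real.exp (t*B + m' * (-(c*μ/R))) ≤ Real.exp (-Real.log (2/δ)) :=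
            Real.exp_le_exp.2 hexparg
        _ = δ/2 := by
            rw [Real.exp_neg, Real.exp_log (by positivity), inv_div]
    calc Real.exp (t*B) * ((q:ℝ)^d * Real.exp (-(c * μ / R)))^(m')
        = (Real.exp (t*B) * Real.exp (-(c*μ/R))^(m')) * ((q:ℝ)^d)^(m') := by
          rw [mul_pow]; ring
      _ ≤ δ/2 * ((q:ℝ)^d)^(m') := mul_le_mul_of_nonneg_right hexp (by positivity)
      _ = δ/2 * (q:ℝ)^(m'*d) := by rw [← pow_mul, Nat.mul_comm d m']
  calc ((Finset.univ.filter fun a : Fin m' → Fin d → Fin q =>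
      ¬ (B ≤ ∑ i, Y (a i))).card : ℝ)
      ≤ Real.exp (t*B) * (∑ v, Real.exp (-(t * Y v)))^(m') := hstep1
    _ ≤ Real.exp (t*B) * ((q:ℝ)^d * Real.exp (-(c * μ / R)))^(m') :=
        mul_le_mul_of_nonneg_left hpow (Real.exp_pos _).le
    _ ≤ δ/2 * (q:ℝ)^(m'*d) := hfinal


lemma countPi {m n q : ℕ} (T : Fin m → Fin n → Finset (Fin q)) :
    ((Finset.univ.filter fun M : Fin m → Fin n → Fin q => ∀ i j, M i j ∈ T i j).card)
      = ∏ i, ∏ j, (T i j).card := by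
  have h : (Finset.univ.filter fun M : Fin m → Fin n → Fin q => ∀ i j, M i j ∈ T i j)
      = Fintype.piFinset (fun i => Fintype.piFinset (T i)) := by
    ext M; simp [Fintype.mem_piFinset]
  rw [h, Fintype.card_piFinset]
  simp [Fintype.card_piFinset]

def prefixMap {q d m' n : ℕ} (hdn : d ≤ n) (M : Fin m' → Fin n → Fin q) :
    Fin m' → Fin d → Fin q := fun i k => M i (Fin.castLE hdn k)

lemma cardJlt {n d : ℕ} (hdn : d ≤ n) :
    (Finset.univ.filter fun j : Fin n => (j : ℕ) < d).card = d := by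
  have h : (Finset.univ.filter fun j : Fin n => (j : ℕ) < d)
      = Finset.map (Fin.castLEEmb hdn) Finset.univ := by
    ext j
    simp only [Finset.mem_filter, Finset.mem_univ, true_and, Finset.mem_map,
      Fin.castLEEmb_apply]
    constructor
    · intro h; exact ⟨⟨(j : ℕ), h⟩, rfl⟩
    · rintro ⟨k, rfl⟩; exact k.isLt
  rw [h, Finset.card_map, Finset.card_univ, Fintype.card_fin]

lemma cardJge {n d : ℕ} (hdn : d ≤ n) :
    (Finset.univ.filter fun j : Fin n => ¬ ((j : ℕ) < d)).card = n - d := by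
  have h := Finset.card_filter_add_card_filter_not
    (s := (Finset.univ : Finset (Fin n))) (p := fun j : Fin n => (j : ℕ) < d)
  rw [Finset.card_univ, Fintype.card_fin, cardJlt hdn] at h
  omega

lemma fiber_card {q d m' n : ℕ} (hdn : d ≤ n) (a : Fin m' → Fin d → Fin q) :
    ((Finset.univ.filter fun M : Fin m' → Fin n → Fin q =>
        prefixMap hdn M = a).card) = q ^ (m' * (n - d)) := by
  classical
  set T : Fin m' → Fin n → Finset (Fin q) :=
    fun i j => if h : (j : ℕ) < d then {a i ⟨(j : ℕ), h⟩} else Finset.univ with hT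
  have hset : (Finset.univ.filter fun M : Fin m' → Fin n → Fin q => prefixMap hdn M = a)
      = Finset.univ.filter fun M : Fin m' → Fin n → Fin q => ∀ i j, M i j ∈ T i j := by
    ext M
    simp only [Finset.mem_filter, Finset.mem_univ, true_and]
    constructor
    · intro hMa i j
      rw [hT]
      dsimp only
      split
      · next h =>
        have h2 := congrFun (congrFun hMa i) ⟨(j : ℕ), h⟩
        rw [Finset.mem_singleton, ← h2]
        rfl
      · exact Finset.mem_univ _
    · intro hT'
      funext i k
      have h2 := hT' i (Fin.castLE hdn k)
      rw [hT] at h2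
      dsimp only at h2
      rw [dif_pos (by simpa using k.isLt), Finset.mem_singleton] at h2
      exact h2
  rw [hset, countPi]
  have hcard : ∀ i j, (T i j).card = if (j : ℕ) < d then 1 else q := by
    intro i j; rw [hT]; dsimp only; split <;> simp
  calc ∏ i : Fin m', ∏ j, (T i j).card = ∏ _i : Fin m', q ^ (n - d) := by
        apply Finset.prod_congr rfl; intro i _
        rw [Finset.prod_congr rfl (fun j _ => hcard i j),
          ← Finset.prod_filter_mul_prod_filter_not Finset.univ (fun j : Fin n => (j : ℕ) < d),
          Finset.prod_congr rfl (fun j hj => if_pos (Finset.mem_filter.mp hj).2),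
          Finset.prod_const_one, one_mul,
          Finset.prod_congr rfl (fun j hj => if_neg (Finset.mem_filter.mp hj).2),
          Finset.prod_const, cardJge hdn]
    _ = q ^ (m' * (n - d)) := by
        rw [Finset.prod_const, Finset.card_univ, Fintype.card_fin, ← pow_mul, Nat.mul_comm]

lemma badcol_card {q d m' n : ℕ} (hd1 : 1 ≤ d) (hdn : d ≤ n)
    (a : Fin m' → Fin d → Fin q) (j : Fin n) (hj : d ≤ (j : ℕ)) :
    ((Finset.univ.filter fun M : Fin m' → Fin n → Fin q =>
        prefixMap hdn M = a ∧
          ∀ i, ∃ k : Fin n, (k : ℕ) < d ∧ M i j = M i k).card)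
      = (∏ i, (Finset.image (a i) Finset.univ).card) * q ^ (m' * (n - d - 1)) := by
  classical
  set T : Fin m' → Fin n → Finset (Fin q) :=
    fun i j' => if h : (j' : ℕ) < d then {a i ⟨(j' : ℕ), h⟩}
      else if j' = j then Finset.image (a i) Finset.univ else Finset.univ with hT
  have hjnd : ¬ ((j : ℕ) < d) := by omega
  have hset : (Finset.univ.filter fun M : Fin m' → Fin n → Fin q =>
        prefixMap hdn M = a ∧ ∀ i, ∃ k : Fin n, (k : ℕ) < d ∧ M i j = M i k)
      = Finset.univ.filter fun M : Fin m' → Fin n → Fin q => ∀ i j', M i j' ∈ T i j' := by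
    ext M
    simp only [Finset.mem_filter, Finset.mem_univ, true_and]
    constructor
    · rintro ⟨hMa, hbad⟩ i j'
      rw [hT]
      dsimp only
      split
      · next h =>
        have h2 := congrFun (congrFun hMa i) ⟨(j' : ℕ), h⟩
        rw [Finset.mem_singleton, ← h2]
        rfl
      · next h =>
        split
        · next hjj =>
          subst hjj
          obtain ⟨k, hk, he⟩ := hbad i
          have h2 := congrFun (congrFun hMa i) ⟨(k : ℕ), hk⟩
          have h3 : M i k = a i ⟨(k : ℕ), hk⟩ := h2
          rw [he, h3]
          exact Finset.mem_image_of_mem _ (Finset.mem_univ _)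
        · exact Finset.mem_univ _
    · intro hT'
      constructor
      · funext i k
        have h2 := hT' i (Fin.castLE hdn k)
        rw [hT] at h2
        dsimp only at h2
        rw [dif_pos (by simpa using k.isLt), Finset.mem_singleton] at h2
        exact h2
      · intro i
        have h2 := hT' i j
        rw [hT] at h2
        dsimp only at h2
        rw [dif_neg hjnd, if_pos rfl, Finset.mem_image] at h2
        obtain ⟨kd, -, he⟩ := h2
        refine ⟨Fin.castLE hdn kd, by simpa using kd.isLt, ?_⟩
        have h3 := hT' i (Fin.castLE hdn kd)
        rw [hT] at h3
        dsimp only at h3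
        rw [dif_pos (by simpa using kd.isLt), Finset.mem_singleton] at h3
        rw [h3, ← he]
        rfl
  rw [hset, countPi]
  have hcard : ∀ i j', (T i j').card
      = if (j' : ℕ) < d then 1 else if j' = j then (Finset.image (a i) Finset.univ).card else q := by
    intro i j'; rw [hT]; dsimp only; split
    · simp
    · split <;> simp
  have hmem : j ∈ Finset.univ.filter fun j' : Fin n => ¬ ((j' : ℕ) < d) :=
    Finset.mem_filter.mpr ⟨Finset.mem_univ _, hjnd⟩
  calc ∏ i : Fin m', ∏ j', (T i j').card
      = ∏ i : Fin m', ((Finset.image (a i) Finset.univ).card * q ^ (n - d - 1)) := by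
        apply Finset.prod_congr rfl; intro i _
        rw [Finset.prod_congr rfl (fun j' _ => hcard i j'),
          ← Finset.prod_filter_mul_prod_filter_not Finset.univ (fun j' : Fin n => (j' : ℕ) < d),
          Finset.prod_congr rfl (fun j' hj' => if_pos (Finset.mem_filter.mp hj').2),
          Finset.prod_const_one, one_mul,
          Finset.prod_congr rfl (fun j' hj' => if_neg (Finset.mem_filter.mp hj').2),
          ← Finset.mul_prod_erase _ _ hmem, if_pos rfl,
          Finset.prod_congr rfl (fun j' hj' => if_neg (Finset.ne_of_mem_erase hj')),
          Finset.prod_const, Finset.card_erase_of_mem hmem, cardJge hdn]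
    _ = (∏ i, (Finset.image (a i) Finset.univ).card) * q ^ (m' * (n - d - 1)) := by
        rw [Finset.prod_mul_distrib, Finset.prod_const, Finset.card_univ, Fintype.card_fin,
          ← pow_mul, Nat.mul_comm (n - d - 1)]

lemma neg_log_Pqd (q d : ℕ) (hd : 1 ≤ d) (hq : 1 ≤ q) :
    -Real.log (Pqd q d)
      = (∑ v : Fin d → Fin q,
          (Real.log q - Real.log ((Finset.image v Finset.univ).card))) / (q:ℝ)^d := by
  have hq0 : (0:ℝ) < q := by exact_mod_cast hq
  have hpos : ∀ i ∈ Finset.Icc 1 d, (0:ℝ) < ((i:ℝ)/q) ^ Rqd q d i := by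
    intro i hi
    rw [Finset.mem_Icc] at hi
    have : (0:ℝ) < (i:ℝ)/q := by
      apply div_pos _ hq0; exact_mod_cast hi.1
    positivity
  have hB : (0:ℝ) < ∏ i ∈ Finset.Icc 1 d, ((i : ℝ) / q) ^ Rqd q d i :=
    Finset.prod_pos hpos
  have hlog : Real.log (Pqd q d)
      = ((q:ℝ)^d)⁻¹ * Real.log (∏ i ∈ Finset.Icc 1 d, ((i : ℝ) / q) ^ Rqd q d i) := by
    rw [Pqd, Real.log_rpow hB]
  rw [hlog, Real.log_prod (fun i hi => (hpos i hi).ne')]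
  have hXmem : ∀ v : Fin d → Fin q, (Finset.image v Finset.univ).card ∈ Finset.Icc 1 d := by
    intro v
    rw [Finset.mem_Icc]
    constructor
    · rw [Nat.one_le_iff_ne_zero, ← Nat.pos_iff_ne_zero, Finset.card_pos]
      have : Nonempty (Fin d) := ⟨⟨0, hd⟩⟩
      exact (Finset.univ_nonempty.image v)
    · exact le_trans (Finset.card_image_le) (by simp)
  have hsum : ∑ i ∈ Finset.Icc 1 d, Real.log (((i : ℝ) / q) ^ Rqd q d i)
      = ∑ v : Fin d → Fin q,
          Real.log (((Finset.image v Finset.univ).card : ℝ) / q) := by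
    rw [← Finset.sum_fiberwise_of_maps_to (fun v _ => hXmem v)
      (fun v : Fin d → Fin q => Real.log (((Finset.image v Finset.univ).card : ℝ) / q))]
    apply Finset.sum_congr rfl
    intro i _
    have he : ∑ v ∈ Finset.filter (fun v : Fin d → Fin q =>
          (Finset.image v Finset.univ).card = i) Finset.univ,
        Real.log (((Finset.image v Finset.univ).card : ℝ) / q)
        = ∑ _v ∈ Finset.filter (fun v : Fin d → Fin q =>
          (Finset.image v Finset.univ).card = i) Finset.univ, Real.log ((i:ℝ)/q) :=
      Finset.sum_congr rfl (fun v hv => by rw [(Finset.mem_filter.mp hv).2])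
    rw [he, Finset.sum_const, nsmul_eq_mul, Real.log_pow, Rqd, mul_comm]
  rw [hsum]
  have hterm : ∀ v : Fin d → Fin q,
      Real.log (((Finset.image v Finset.univ).card : ℝ) / q)
        = -(Real.log q - Real.log ((Finset.image v Finset.univ).card)) := by
    intro v
    have h1 : ((Finset.image v Finset.univ).card : ℝ) ≠ 0 := by
      have := hXmem v; rw [Finset.mem_Icc] at this
      exact_mod_cast Nat.one_le_iff_ne_zero.mp this.1
    rw [Real.log_div h1 hq0.ne']
    ring
  rw [Finset.sum_congr rfl (fun v _ => hterm v), Finset.sum_neg_distrib]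
  field_simp

set_option maxHeartbeats 1000000 in
theorem utd_upper_bound (q d m' n : ℕ) (hd2 : 2 ≤ d) (hdq : d ≤ q) (hm' : 1 ≤ m')
    (hn : d < n) (δ : ℝ) (hδ : δ ∈ Set.Ioo (0 : ℝ) 1)
    (hlam : Real.sqrt ((2 * (q : ℝ) ^ d / m') * Real.log (2 * (q : ℝ) ^ d / δ)) < 1)
    (hm : (m' : ℝ) ≥ Real.log (2 * n / δ) /
      ((1 - Real.sqrt ((2 * (q : ℝ) ^ d / m') * Real.log (2 * (q : ℝ) ^ d / δ))) *
        (-Real.log (Pqd q d)))) :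
    ((Finset.univ.filter (fun M : Fin m' → Fin n → Fin q =>
        ∀ j : Fin n, d ≤ (j : ℕ) →
          ∃ i : Fin m', ∀ k : Fin n, (k : ℕ) < d → M i j ≠ M i k)).card : ℝ) /
      (q : ℝ) ^ (m' * n) ≥ 1 - δ := by
  obtain ⟨hδ0, hδ1⟩ := hδ
  have hq2 : 2 ≤ q := hd2.trans hdq
  have hdn : d ≤ n := hn.le
  have hd0 : 0 < d := by omega
  have hexpsplit : m' + m'*(n-d-1) = m'*(n-d) := by
    obtain ⟨e, he⟩ : ∃ e, n - d = e + 1 := ⟨n - d - 1, by omega⟩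
    rw [he, Nat.add_sub_cancel, Nat.mul_add, Nat.mul_one, Nat.add_comm]
  have epow : (q:ℝ)^(m'*d) * (q:ℝ)^(m'*(n-d)) = (q:ℝ)^(m'*n) := by
    rw [← pow_add, ← Nat.mul_add, show d + (n-d) = n by omega]
  have hq1R : (1:ℝ) < q := by exact_mod_cast hq2.trans_lt' one_lt_two
  have hq0 : (0:ℝ) < q := by linarith
  have hR : 0 < Real.log q := Real.log_pos hq1R
  have hqd0 : (0:ℝ) < (q:ℝ)^d := by positivity
  have hqd1 : (1:ℝ) ≤ (q:ℝ)^d := one_le_pow₀ hq1R.le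
  have hm'0 : (0:ℝ) < m' := by exact_mod_cast hm'
  have hn0 : (0:ℝ) < n := by exact_mod_cast (by omega : 0 < n)
  set lam := Real.sqrt ((2 * (q : ℝ) ^ d / m') * Real.log (2 * (q : ℝ) ^ d / δ)) with hlamdef
  have hlam0 : 0 ≤ lam := Real.sqrt_nonneg _
  have hLarg : (0:ℝ) ≤ Real.log (2 * (q:ℝ)^d / δ) :=
    Real.log_nonneg (by rw [le_div_iff₀ hδ0]; nlinarith)
  have hlamsq : (m':ℝ) * lam^2 = 2*(q:ℝ)^d * Real.log (2*(q:ℝ)^d/δ) := by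
    rw [hlamdef, Real.sq_sqrt (mul_nonneg (by positivity) hLarg)]
    field_simp
  -- the Y function
  set Y : (Fin d → Fin q) → ℝ :=
    fun v => Real.log q - Real.log ((Finset.image v Finset.univ).card) with hYdef
  have hX1 : ∀ v : Fin d → Fin q, 1 ≤ (Finset.image v Finset.univ).card := by
    intro v
    have : Nonempty (Fin d) := ⟨⟨0, hd0⟩⟩
    rw [Nat.one_le_iff_ne_zero, ← Nat.pos_iff_ne_zero, Finset.card_pos]
    exact Finset.univ_nonempty.image v
  have hXq : ∀ v : Fin d → Fin q, (Finset.image v Finset.univ).card ≤ q := by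
    intro v; simpa using Finset.card_le_univ (Finset.image v Finset.univ)
  have hY0 : ∀ v, 0 ≤ Y v := by
    intro v; simp only [hYdef]
    have h1 : Real.log ((Finset.image v Finset.univ).card : ℝ) ≤ Real.log q :=
      Real.log_le_log (by exact_mod_cast hX1 v) (by exact_mod_cast hXq v)
    linarith
  have hYR : ∀ v, Y v ≤ Real.log q := by
    intro v; simp only [hYdef]
    have h1 : 0 ≤ Real.log ((Finset.image v Finset.univ).card : ℝ) :=
      Real.log_nonneg (by exact_mod_cast hX1 v)
    linarith
  have hsumY : (q:ℝ) * Real.log q ≤ ∑ v, Y v := by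
    have hinj : Function.Injective (fun s : Fin q => (Function.const (Fin d) s)) := by
      intro s1 s2 h; exact congrFun h ⟨0, hd0⟩
    have himg : ∀ s : Fin q, Y (Function.const (Fin d) s) = Real.log q := by
      intro s; simp only [hYdef]
      have h2 : (Finset.image (Function.const (Fin d) s) Finset.univ) = {s} := by
        have : Nonempty (Fin d) := ⟨⟨0, hd0⟩⟩
        ext x; simp [Function.const, eq_comm]
      rw [h2]; simp
    calc (q:ℝ) * Real.log q
        = ∑ s : Fin q, Y (Function.const (Fin d) s) := by
          rw [Finset.sum_congr rfl (fun s _ => himg s), Finset.sum_const, Finset.card_univ,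
            Fintype.card_fin, nsmul_eq_mul]
      _ = ∑ v ∈ Finset.univ.image (fun s : Fin q => Function.const (Fin d) s), Y v :=
          (Finset.sum_image (fun s _ t _ h => hinj h)).symm
      _ ≤ ∑ v, Y v := Finset.sum_le_sum_of_subset_of_nonneg (Finset.subset_univ _)
          (fun v _ _ => hY0 v)
  set μ := (∑ v : Fin d → Fin q, Y v) / (q:ℝ)^d with hμdef
  have hμ0 : 0 < μ := div_pos (lt_of_lt_of_le (by positivity) hsumY) hqd0
  have hmuP : -Real.log (Pqd q d) = μ := by
    rw [neg_log_Pqd q d (by omega) (by omega), hμdef, hYdef]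
  have hlam1 : lam < 1 := hlam
  have hBge : Real.log (2*(n:ℝ)/δ) ≤ (1-lam)*(m':ℝ)*μ := by
    rw [hmuP] at hm
    have hD : 0 < (1-lam)*μ := mul_pos (by linarith) hμ0
    rw [ge_iff_le, div_le_iff₀ hD] at hm
    calc Real.log (2*(n:ℝ)/δ) ≤ (m':ℝ) * ((1-lam)*μ) := hm
      _ = (1-lam)*(m':ℝ)*μ := by ring
  have hGc := chernoff q d m' hq2 hm' δ lam hδ0 hδ1 Y hY0 hYR hsumY hlam0 hlam1 hlamsq
  rw [← hμdef] at hGc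
  -- weight bound for good prefixes
  have hWa : ∀ a : Fin m' → Fin d → Fin q,
      ((1-lam)*(m':ℝ)*μ ≤ ∑ i, Y (a i)) →
      ((∏ i, (Finset.image (a i) Finset.univ).card : ℕ) : ℝ)
        ≤ δ/(2*(n:ℝ)) * (q:ℝ)^(m' : ℕ) := by
    intro a ha
    have h2 : ∀ i : Fin m', ((Finset.image (a i) Finset.univ).card : ℝ)
        = Real.exp (Real.log q - Y (a i)) := by
      intro i
      simp only [hYdef]
      rw [show Real.log q - (Real.log q
          - Real.log ((Finset.image (a i) Finset.univ).card))
          = Real.log ((Finset.image (a i) Finset.univ).card : ℝ) by ring,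
        Real.exp_log (by exact_mod_cast hX1 (a i))]
    have h1 : ((∏ i, (Finset.image (a i) Finset.univ).card : ℕ) : ℝ)
        = Real.exp (-∑ i, Y (a i)) * (q:ℝ)^(m' : ℕ) := by
      calc ((∏ i, (Finset.image (a i) Finset.univ).card : ℕ) : ℝ)
          = ∏ i, ((Finset.image (a i) Finset.univ).card : ℝ) := by push_cast; rfl
        _ = ∏ i, Real.exp (Real.log q - Y (a i)) := Finset.prod_congr rfl (fun i _ => h2 i)
        _ = Real.exp (∑ i : Fin m', (Real.log q - Y (a i))) := (Real.exp_sum _ _).symm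
        _ = Real.exp (-∑ i, Y (a i)) * (q:ℝ)^(m' : ℕ) := by
            rw [Finset.sum_sub_distrib, Finset.sum_const, Finset.card_univ, Fintype.card_fin,
              nsmul_eq_mul,
              show (m':ℝ)*Real.log q - ∑ i, Y (a i)
                = (-∑ i, Y (a i)) + (m':ℝ)*Real.log q by ring,
              Real.exp_add, Real.exp_nat_mul, Real.exp_log hq0]
    rw [h1]
    have h3 : Real.exp (-∑ i, Y (a i)) ≤ δ/(2*(n:ℝ)) := by
      have h4 : Real.exp (-∑ i, Y (a i)) ≤ Real.exp (-(Real.log (2*(n:ℝ)/δ))) :=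
        Real.exp_le_exp.2 (by linarith [hBge])
      have h6 : Real.exp (-(Real.log (2*(n:ℝ)/δ))) = δ/(2*(n:ℝ)) := by
        rw [Real.exp_neg, Real.exp_log (by positivity), inv_div]
      linarith
    exact mul_le_mul_of_nonneg_right h3 (by positivity)
  -- counting
  have htot : (Finset.univ.filter (fun M : Fin m' → Fin n → Fin q =>
        ∀ j : Fin n, d ≤ (j : ℕ) →
          ∃ i : Fin m', ∀ k : Fin n, (k : ℕ) < d → M i j ≠ M i k)).card
      + (Finset.univ.filter (fun M : Fin m' → Fin n → Fin q =>
        ¬ ∀ j : Fin n, d ≤ (j : ℕ) →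
          ∃ i : Fin m', ∀ k : Fin n, (k : ℕ) < d → M i j ≠ M i k)).card = q^(m'*n) := by
    rw [Finset.card_filter_add_card_filter_not, Finset.card_univ]
    rw [show Fintype.card (Fin m' → Fin n → Fin q) = (q^n)^(m') by
      simp [Fintype.card_fun], ← pow_mul, Nat.mul_comm n m']
  have hfib : ∀ S : Finset (Fin m' → Fin d → Fin q),
      (Finset.univ.filter (fun M : Fin m' → Fin n → Fin q => prefixMap hdn M ∈ S)).card
        = S.card * q^(m'*(n-d)) := by
    intro S
    rw [Finset.card_eq_sum_card_fiberwise
      (f := fun M : Fin m' → Fin n → Fin q => prefixMap hdn M) (t := S)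
      (s := Finset.univ.filter (fun M : Fin m' → Fin n → Fin q => prefixMap hdn M ∈ S))
      (fun M hM => (Finset.mem_filter.mp hM).2)]
    have h1 : ∀ a ∈ S,
        ((Finset.univ.filter (fun M : Fin m' → Fin n → Fin q => prefixMap hdn M ∈ S)).filter
          (fun M => prefixMap hdn M = a)).card = q^(m'*(n-d)) := by
      intro a ha
      have h2 : (Finset.univ.filter
            (fun M : Fin m' → Fin n → Fin q => prefixMap hdn M ∈ S)).filter
          (fun M => prefixMap hdn M = a)
          = Finset.univ.filter (fun M : Fin m' → Fin n → Fin q => prefixMap hdn M = a) := by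
        ext M
        simp only [Finset.mem_filter, Finset.mem_univ, true_and]
        constructor
        · rintro ⟨-, h⟩; exact h
        · intro h; exact ⟨h ▸ ha, h⟩
      rw [h2, fiber_card hdn a]
    rw [Finset.sum_congr rfl h1, Finset.sum_const, smul_eq_mul]
  have hout : ((Finset.univ.filter (fun M : Fin m' → Fin n → Fin q =>
        ¬ ∀ j : Fin n, d ≤ (j : ℕ) →
          ∃ i : Fin m', ∀ k : Fin n, (k : ℕ) < d → M i j ≠ M i k)).filter
      (fun M => ¬ ((1-lam)*(m':ℝ)*μ ≤ ∑ i, Y (prefixMap hdn M i)))).card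
      ≤ (Finset.univ.filter (fun a : Fin m' → Fin d → Fin q =>
          ¬ ((1-lam)*(m':ℝ)*μ ≤ ∑ i, Y (a i)))).card * q^(m'*(n-d)) := by
    rw [← hfib]
    apply Finset.card_le_card
    intro M hM
    simp only [Finset.mem_filter, Finset.mem_univ, true_and] at *
    exact hM.2
  have hin : ((Finset.univ.filter (fun M : Fin m' → Fin n → Fin q =>
        ¬ ∀ j : Fin n, d ≤ (j : ℕ) →
          ∃ i : Fin m', ∀ k : Fin n, (k : ℕ) < d → M i j ≠ M i k)).filter
      (fun M => (1-lam)*(m':ℝ)*μ ≤ ∑ i, Y (prefixMap hdn M i))).card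
      ≤ ∑ a ∈ (Finset.univ.filter (fun a : Fin m' → Fin d → Fin q =>
            (1-lam)*(m':ℝ)*μ ≤ ∑ i, Y (a i))),
          ∑ j ∈ (Finset.univ.filter (fun j : Fin n => d ≤ (j:ℕ))),
          (Finset.univ.filter (fun M : Fin m' → Fin n → Fin q =>
            prefixMap hdn M = a ∧ ∀ i, ∃ k : Fin n, (k:ℕ) < d ∧ M i j = M i k)).card := by
    calc ((Finset.univ.filter (fun M : Fin m' → Fin n → Fin q =>
        ¬ ∀ j : Fin n, d ≤ (j : ℕ) →
          ∃ i : Fin m', ∀ k : Fin n, (k : ℕ) < d → M i j ≠ M i k)).filter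
      (fun M => (1-lam)*(m':ℝ)*μ ≤ ∑ i, Y (prefixMap hdn M i))).card
        ≤ ((Finset.univ.filter (fun a : Fin m' → Fin d → Fin q =>
            (1-lam)*(m':ℝ)*μ ≤ ∑ i, Y (a i))).biUnion (fun a =>
            (Finset.univ.filter (fun j : Fin n => d ≤ (j:ℕ))).biUnion (fun j =>
            Finset.univ.filter (fun M : Fin m' → Fin n → Fin q =>
              prefixMap hdn M = a ∧ ∀ i, ∃ k : Fin n, (k:ℕ) < d ∧ M i j = M i k)))).card := by
          apply Finset.card_le_card
          intro M hM
          simp only [Finset.mem_filter, Finset.mem_univ, true_and] at hM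
          obtain ⟨hnP, hpre⟩ := hM
          push_neg at hnP
          obtain ⟨j, hj, hcol⟩ := hnP
          apply Finset.mem_biUnion.2
          refine ⟨prefixMap hdn M, Finset.mem_filter.2 ⟨Finset.mem_univ _, hpre⟩, ?_⟩
          apply Finset.mem_biUnion.2
          refine ⟨j, Finset.mem_filter.2 ⟨Finset.mem_univ _, hj⟩, ?_⟩
          exact Finset.mem_filter.2 ⟨Finset.mem_univ _, rfl, hcol⟩
      _ ≤ _ := le_trans Finset.card_biUnion_le
          (Finset.sum_le_sum (fun a _ => Finset.card_biUnion_le))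
  -- assemble
  have hsplit := Finset.card_filter_add_card_filter_not
    (s := Finset.univ.filter (fun M : Fin m' → Fin n → Fin q =>
        ¬ ∀ j : Fin n, d ≤ (j : ℕ) →
          ∃ i : Fin m', ∀ k : Fin n, (k : ℕ) < d → M i j ≠ M i k))
    (p := fun M => (1-lam)*(m':ℝ)*μ ≤ ∑ i, Y (prefixMap hdn M i))
  have hJle : ((Finset.univ.filter (fun j : Fin n => d ≤ (j:ℕ))).card : ℝ) ≤ n := by
    have h1 : (Finset.univ.filter (fun j : Fin n => d ≤ (j:ℕ))).card ≤ n :=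
      le_trans (Finset.card_filter_le _ _) (by simp)
    exact_mod_cast h1
  have hGle : ((Finset.univ.filter (fun a : Fin m' → Fin d → Fin q =>
      (1-lam)*(m':ℝ)*μ ≤ ∑ i, Y (a i))).card : ℝ) ≤ (q:ℝ)^(m'*d) := by
    have h1 : (Finset.univ.filter (fun a : Fin m' → Fin d → Fin q =>
        (1-lam)*(m':ℝ)*μ ≤ ∑ i, Y (a i))).card ≤ q^(m'*d) := by
      refine le_trans (Finset.card_filter_le _ _) ?_
      rw [Finset.card_univ,
        show Fintype.card (Fin m' → Fin d → Fin q) = (q^d)^(m') by simp [Fintype.card_fun],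
        ← pow_mul, Nat.mul_comm d m']
    exact_mod_cast h1
  have hinR : (((Finset.univ.filter (fun M : Fin m' → Fin n → Fin q =>
        ¬ ∀ j : Fin n, d ≤ (j : ℕ) →
          ∃ i : Fin m', ∀ k : Fin n, (k : ℕ) < d → M i j ≠ M i k)).filter
      (fun M => (1-lam)*(m':ℝ)*μ ≤ ∑ i, Y (prefixMap hdn M i))).card : ℝ)
      ≤ δ/2 * (q:ℝ)^(m'*n) := by
    have hstep : ∀ a ∈ (Finset.univ.filter (fun a : Fin m' → Fin d → Fin q =>
          (1-lam)*(m':ℝ)*μ ≤ ∑ i, Y (a i))),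
        ∀ j ∈ (Finset.univ.filter (fun j : Fin n => d ≤ (j:ℕ))),
        (((Finset.univ.filter (fun M : Fin m' → Fin n → Fin q =>
            prefixMap hdn M = a ∧ ∀ i, ∃ k : Fin n, (k:ℕ) < d ∧ M i j = M i k)).card : ℕ) : ℝ)
          ≤ δ/(2*(n:ℝ)) * (q:ℝ)^(m'*(n-d)) := by
      intro a ha j hj
      have hjd : d ≤ (j:ℕ) := (Finset.mem_filter.mp hj).2
      have haG : (1-lam)*(m':ℝ)*μ ≤ ∑ i, Y (a i) := (Finset.mem_filter.mp ha).2
      rw [badcol_card hd0 hdn a j hjd]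
      calc (((∏ i, (Finset.image (a i) Finset.univ).card) * q^(m'*(n-d-1)) : ℕ) : ℝ)
          = ((∏ i, (Finset.image (a i) Finset.univ).card : ℕ) : ℝ) * (q:ℝ)^(m'*(n-d-1)) := by
            push_cast; ring
        _ ≤ (δ/(2*(n:ℝ)) * (q:ℝ)^(m' : ℕ)) * (q:ℝ)^(m'*(n-d-1)) :=
            mul_le_mul_of_nonneg_right (hWa a haG) (by positivity)
        _ = δ/(2*(n:ℝ)) * (q:ℝ)^(m' + m'*(n-d-1)) := by rw [pow_add]; ring
        _ = δ/(2*(n:ℝ)) * (q:ℝ)^(m'*(n-d)) := by rw [hexpsplit]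
    calc (((Finset.univ.filter (fun M : Fin m' → Fin n → Fin q =>
        ¬ ∀ j : Fin n, d ≤ (j : ℕ) →
          ∃ i : Fin m', ∀ k : Fin n, (k : ℕ) < d → M i j ≠ M i k)).filter
      (fun M => (1-lam)*(m':ℝ)*μ ≤ ∑ i, Y (prefixMap hdn M i))).card : ℝ)
        ≤ (((∑ a ∈ (Finset.univ.filter (fun a : Fin m' → Fin d → Fin q =>
            (1-lam)*(m':ℝ)*μ ≤ ∑ i, Y (a i))),
          ∑ j ∈ (Finset.univ.filter (fun j : Fin n => d ≤ (j:ℕ))),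
          (Finset.univ.filter (fun M : Fin m' → Fin n → Fin q =>
            prefixMap hdn M = a ∧ ∀ i, ∃ k : Fin n, (k:ℕ) < d ∧ M i j = M i k)).card) : ℕ) : ℝ) := by
          exact_mod_cast hin
      _ = ∑ a ∈ (Finset.univ.filter (fun a : Fin m' → Fin d → Fin q =>
            (1-lam)*(m':ℝ)*μ ≤ ∑ i, Y (a i))),
          ∑ j ∈ (Finset.univ.filter (fun j : Fin n => d ≤ (j:ℕ))),
          (((Finset.univ.filter (fun M : Fin m' → Fin n → Fin q =>
            prefixMap hdn M = a ∧ ∀ i, ∃ k : Fin n, (k:ℕ) < d ∧ M i j = M i k)).card : ℕ) : ℝ) := by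
          push_cast; rfl
      _ ≤ ∑ a ∈ (Finset.univ.filter (fun a : Fin m' → Fin d → Fin q =>
            (1-lam)*(m':ℝ)*μ ≤ ∑ i, Y (a i))),
          ∑ _j ∈ (Finset.univ.filter (fun j : Fin n => d ≤ (j:ℕ))),
            (δ/(2*(n:ℝ)) * (q:ℝ)^(m'*(n-d))) :=
          Finset.sum_le_sum (fun a ha => Finset.sum_le_sum (fun j hj => hstep a ha j hj))
      _ = ((Finset.univ.filter (fun a : Fin m' → Fin d → Fin q =>
            (1-lam)*(m':ℝ)*μ ≤ ∑ i, Y (a i))).card : ℝ)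
          * (((Finset.univ.filter (fun j : Fin n => d ≤ (j:ℕ))).card : ℝ)
            * (δ/(2*(n:ℝ)) * (q:ℝ)^(m'*(n-d)))) := by
          rw [Finset.sum_const, Finset.sum_const, nsmul_eq_mul, nsmul_eq_mul]
      _ ≤ (q:ℝ)^(m'*d) * ((n:ℝ) * (δ/(2*(n:ℝ)) * (q:ℝ)^(m'*(n-d)))) := by
          apply mul_le_mul hGle (mul_le_mul_of_nonneg_right hJle (by positivity))
            (by positivity) (by positivity)
      _ = δ/2 * ((q:ℝ)^(m'*d) * (q:ℝ)^(m'*(n-d))) := by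
          field_simp
      _ = δ/2 * (q:ℝ)^(m'*n) := by rw [epow]
  have houtR : (((Finset.univ.filter (fun M : Fin m' → Fin n → Fin q =>
        ¬ ∀ j : Fin n, d ≤ (j : ℕ) →
          ∃ i : Fin m', ∀ k : Fin n, (k : ℕ) < d → M i j ≠ M i k)).filter
      (fun M => ¬ ((1-lam)*(m':ℝ)*μ ≤ ∑ i, Y (prefixMap hdn M i)))).card : ℝ)
      ≤ δ/2 * (q:ℝ)^(m'*n) := by
    calc (((Finset.univ.filter (fun M : Fin m' → Fin n → Fin q =>
        ¬ ∀ j : Fin n, d ≤ (j : ℕ) →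
          ∃ i : Fin m', ∀ k : Fin n, (k : ℕ) < d → M i j ≠ M i k)).filter
      (fun M => ¬ ((1-lam)*(m':ℝ)*μ ≤ ∑ i, Y (prefixMap hdn M i)))).card : ℝ)
        ≤ (((Finset.univ.filter (fun a : Fin m' → Fin d → Fin q =>
          ¬ ((1-lam)*(m':ℝ)*μ ≤ ∑ i, Y (a i)))).card * q^(m'*(n-d)) : ℕ) : ℝ) := by
          exact_mod_cast hout
      _ = ((Finset.univ.filter (fun a : Fin m' → Fin d → Fin q =>
          ¬ ((1-lam)*(m':ℝ)*μ ≤ ∑ i, Y (a i)))).card : ℝ) * (q:ℝ)^(m'*(n-d)) := by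
          push_cast; ring
      _ ≤ (δ/2 * (q:ℝ)^(m'*d)) * (q:ℝ)^(m'*(n-d)) :=
          mul_le_mul_of_nonneg_right hGc (by positivity)
      _ = δ/2 * (q:ℝ)^(m'*n) := by rw [mul_assoc, epow]
  have hbadR : ((Finset.univ.filter (fun M : Fin m' → Fin n → Fin q =>
        ¬ ∀ j : Fin n, d ≤ (j : ℕ) →
          ∃ i : Fin m', ∀ k : Fin n, (k : ℕ) < d → M i j ≠ M i k)).card : ℝ)
      ≤ δ * (q:ℝ)^(m'*n) := by
    have e1 : (((Finset.univ.filter (fun M : Fin m' → Fin n → Fin q =>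
        ¬ ∀ j : Fin n, d ≤ (j : ℕ) →
          ∃ i : Fin m', ∀ k : Fin n, (k : ℕ) < d → M i j ≠ M i k)).filter
      (fun M => (1-lam)*(m':ℝ)*μ ≤ ∑ i, Y (prefixMap hdn M i))).card : ℝ)
        + (((Finset.univ.filter (fun M : Fin m' → Fin n → Fin q =>
        ¬ ∀ j : Fin n, d ≤ (j : ℕ) →
          ∃ i : Fin m', ∀ k : Fin n, (k : ℕ) < d → M i j ≠ M i k)).filter
      (fun M => ¬ ((1-lam)*(m':ℝ)*μ ≤ ∑ i, Y (prefixMap hdn M i)))).card : ℝ)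
        = ((Finset.univ.filter (fun M : Fin m' → Fin n → Fin q =>
        ¬ ∀ j : Fin n, d ≤ (j : ℕ) →
          ∃ i : Fin m', ∀ k : Fin n, (k : ℕ) < d → M i j ≠ M i k)).card : ℝ) := by
      exact_mod_cast hsplit
    linarith [hinR, houtR]
  have hpow0 : (0:ℝ) < (q:ℝ)^(m'*n) := by positivity
  rw [ge_iff_le, le_div_iff₀ hpow0]
  have hcast : ((Finset.univ.filter (fun M : Fin m' → Fin n → Fin q =>
        ∀ j : Fin n, d ≤ (j : ℕ) →
          ∃ i : Fin m', ∀ k : Fin n, (k : ℕ) < d → M i j ≠ M i k)).card : ℝ)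
      + ((Finset.univ.filter (fun M : Fin m' → Fin n → Fin q =>
        ¬ ∀ j : Fin n, d ≤ (j : ℕ) →
          ∃ i : Fin m', ∀ k : Fin n, (k : ℕ) < d → M i j ≠ M i k)).card : ℝ)
      = (q:ℝ)^(m'*n) := by
    exact_mod_cast htot
  linarith [hbadR]

end
end

section
/- Let q ≥ 2, d ≥ 1, m' ≥ 1, and n > d be integers and let δ ∈ (0,1). Assume m' ≥ ln(n/δ)/(−ln(1−(1−1/q)^d)). Let M' be an m'×n matrix with entries chosen independently and uniformly at random from [q] = {1,…,q}. Then for every set I ⊆ {1,…,n} with |I| ≤ d, with probability at least 1 − δ, for every column j ∉ I there exists a row i ∈ {1,…,m'} with M'_{i,j} ∉ {M'_{i,k} : k ∈ I} (that is, the associated binary q-transversal test matrix is (n,I)-disjunct). -/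
open scoped Classical

noncomputable section

private lemma goodrow_lower (q n : ℕ) (hq : 1 ≤ q) (I : Finset (Fin n)) (j : Fin n)
    (hj : j ∉ I) (hIn : I.card ≤ n - 1) :
    (q - 1) ^ I.card * q ^ (n - 1 - I.card) * q ≤
      (Finset.univ.filter (fun f : Fin n → Fin q => ∀ k ∈ I, f j ≠ f k)).card := by
  classical
  set T : Fin q → Finset (Fin n → Fin q) := fun v =>
    Fintype.piFinset (fun k : Fin n =>
      if k = j then ({v} : Finset (Fin q)) else if k ∈ I then {v}ᶜ else Finset.univ) with hT
  have hmemj : ∀ v f, f ∈ T v → f j = v := by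
    intro v f hf
    have := (Fintype.mem_piFinset.mp hf) j
    simpa using this
  have hsub : (Finset.univ : Finset (Fin q)).biUnion T ⊆
      Finset.univ.filter (fun f : Fin n → Fin q => ∀ k ∈ I, f j ≠ f k) := by
    intro f hf
    rcases Finset.mem_biUnion.mp hf with ⟨v, -, hfv⟩
    refine Finset.mem_filter.mpr ⟨Finset.mem_univ _, ?_⟩
    intro k hk
    have hj' := hmemj v f hfv
    have hk' := (Fintype.mem_piFinset.mp hfv) k
    have hkj : k ≠ j := fun h => hj (h ▸ hk)
    rw [if_neg hkj, if_pos hk] at hk'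
    simp only [Finset.mem_compl, Finset.mem_singleton] at hk'
    rw [hj']; exact fun h => hk' h.symm
  have hdisj : ∀ v ∈ (Finset.univ : Finset (Fin q)), ∀ w ∈ (Finset.univ : Finset (Fin q)),
      v ≠ w → Disjoint (T v) (T w) := by
    intro v _ w _ hvw
    rw [Finset.disjoint_left]
    intro f hfv hfw
    exact hvw ((hmemj v f hfv).symm.trans (hmemj w f hfw))
  have hcard : ∀ v, (T v).card = (q - 1) ^ I.card * q ^ (n - 1 - I.card) := by
    intro v
    rw [hT]
    rw [Fintype.card_piFinset]
    have : ∀ k : Fin n, (if k = j then ({v} : Finset (Fin q)) else if k ∈ I then {v}ᶜ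
        else Finset.univ).card = (if k = j then 1 else if k ∈ I then q - 1 else q) := by
      intro k
      by_cases h1 : k = j
      · simp [h1]
      · by_cases h2 : k ∈ I <;> simp [h1, h2, Finset.card_compl]
    rw [Finset.prod_congr rfl (fun k _ => this k)]
    rw [← Finset.mul_prod_erase Finset.univ _ (Finset.mem_univ j), if_pos rfl, one_mul]
    have hcongr : ∀ k ∈ Finset.univ.erase j,
        (if k = j then 1 else if k ∈ I then q - 1 else q) = (if k ∈ I then q - 1 else q) := by
      intro k hk
      rw [if_neg (Finset.ne_of_mem_erase hk)]
    rw [Finset.prod_congr rfl hcongr, Finset.prod_ite, Finset.prod_const, Finset.prod_const]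
    have hfI : (Finset.univ.erase j).filter (fun k => k ∈ I) = I := by
      ext k
      simp only [Finset.mem_filter, Finset.mem_erase, Finset.mem_univ, true_and, and_true]
      constructor
      · exact fun h => h.2
      · intro h; exact ⟨fun he => hj (he ▸ h), h⟩
    have hcards : ((Finset.univ.erase j).filter (fun k => k ∈ I)).card = I.card := by rw [hfI]
    have hcardnot : ((Finset.univ.erase j).filter (fun k => ¬ k ∈ I)).card = n - 1 - I.card := by
      have h1 := Finset.card_filter_add_card_filter_not
        (s := Finset.univ.erase j) (p := fun k => k ∈ I)
      have h2 : (Finset.univ.erase j).card = n - 1 := by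
        simp [Finset.card_erase_of_mem]
      omega
    rw [hcards, hcardnot]
  have hbu : ((Finset.univ : Finset (Fin q)).biUnion T).card
      = q * ((q - 1) ^ I.card * q ^ (n - 1 - I.card)) := by
    rw [Finset.card_biUnion hdisj]
    simp [hcard, Finset.sum_const]
  calc (q - 1) ^ I.card * q ^ (n - 1 - I.card) * q
      = ((Finset.univ : Finset (Fin q)).biUnion T).card := by rw [hbu]; ring
    _ ≤ _ := Finset.card_le_card hsub

lemma analytic_step (q d m' n : ℕ) (hq : 2 ≤ q) (hd : 1 ≤ d) (hm' : 1 ≤ m')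
    (hn : d < n) (δ : ℝ) (hδ : δ ∈ Set.Ioo (0 : ℝ) 1)
    (hm : (m' : ℝ) ≥ Real.log (n / δ) / (-Real.log (1 - (1 - 1 / (q : ℝ)) ^ d))) :
    (n : ℝ) * (1 - (1 - 1 / (q : ℝ)) ^ d) ^ m' ≤ δ := by
  obtain ⟨hδ0, hδ1⟩ := hδ
  set p : ℝ := 1 - (1 - 1 / (q : ℝ)) ^ d with hp
  have hq1 : (1 : ℝ) < q := by exact_mod_cast Nat.lt_of_lt_of_le one_lt_two hq
  have hbase0 : (0 : ℝ) < 1 - 1 / q := by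
    rw [sub_pos, div_lt_one (by linarith)]; exact hq1
  have hbase1 : 1 - 1 / (q : ℝ) < 1 := by
    have : (0:ℝ) < 1 / q := by positivity
    linarith
  have hp0 : 0 < p := by
    have := pow_lt_one₀ hbase0.le hbase1 (by omega : d ≠ 0)
    rw [hp]; linarith
  have hp1 : p < 1 := by
    have : (0:ℝ) < (1 - 1 / (q:ℝ)) ^ d := pow_pos hbase0 d
    rw [hp]; linarith
  have hlogp : Real.log p < 0 := Real.log_neg hp0 hp1
  have hn0 : (0 : ℝ) < n := by
    have : 0 < n := by omega
    exact_mod_cast this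
  have hnδ : 1 < (n : ℝ) / δ := by
    rw [lt_div_iff₀ hδ0]
    have : (1 : ℝ) ≤ n := by exact_mod_cast (by omega : 1 ≤ n)
    nlinarith
  have hlognδ : 0 < Real.log ((n : ℝ) / δ) := Real.log_pos hnδ
  -- from hm : m' ≥ log(n/δ) / (-log p), and -log p > 0
  have hmul : Real.log ((n : ℝ) / δ) ≤ (m' : ℝ) * (-Real.log p) := by
    rw [ge_iff_le, div_le_iff₀ (by linarith : (0:ℝ) < -Real.log p)] at hm
    exact hm
  have hkey : Real.log (p ^ m') ≤ Real.log (δ / n) := by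
    rw [Real.log_pow, Real.log_div hδ0.ne' hn0.ne']
    rw [Real.log_div hn0.ne' hδ0.ne'] at hmul
    linarith
  have hfinal : p ^ m' ≤ δ / n := by
    have h1 : p ^ m' = Real.exp (Real.log (p ^ m')) := (Real.exp_log (pow_pos hp0 m')).symm
    have h2 : δ / n = Real.exp (Real.log (δ / n)) := (Real.exp_log (by positivity)).symm
    rw [h1, h2]
    exact Real.exp_le_exp.mpr hkey
  calc (n : ℝ) * p ^ m' ≤ (n : ℝ) * (δ / n) := by
        exact mul_le_mul_of_nonneg_left hfinal hn0.le
    _ = δ := by field_simp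

private def Rset (q n : ℕ) (I : Finset (Fin n)) (j : Fin n) : Finset (Fin n → Fin q) :=
  Finset.univ.filter (fun f => ∃ k ∈ I, f j = f k)

theorem utd_simple_upper_bound (q d m' n : ℕ) (hq : 2 ≤ q) (hd : 1 ≤ d) (hm' : 1 ≤ m')
    (hn : d < n) (δ : ℝ) (hδ : δ ∈ Set.Ioo (0 : ℝ) 1)
    (hm : (m' : ℝ) ≥ Real.log (n / δ) / (-Real.log (1 - (1 - 1 / (q : ℝ)) ^ d)))
    (I : Finset (Fin n)) (hI : I.card ≤ d) :
    ((Finset.univ.filter (fun M : Fin m' → Fin n → Fin q =>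
        ∀ j : Fin n, j ∉ I → ∃ i : Fin m', ∀ k ∈ I, M i j ≠ M i k)).card : ℝ) /
      (q : ℝ) ^ (m' * n) ≥ 1 - δ := by
  classical
  have hq1 : 1 ≤ q := by omega
  have hq0R : (0:ℝ) < q := by exact_mod_cast (by omega : 0 < q)
  set Good := Finset.univ.filter (fun M : Fin m' → Fin n → Fin q =>
    ∀ j : Fin n, j ∉ I → ∃ i : Fin m', ∀ k ∈ I, M i j ≠ M i k) with hGood
  set Bad := Finset.univ.filter (fun M : Fin m' → Fin n → Fin q =>
    ¬ ∀ j : Fin n, j ∉ I → ∃ i : Fin m', ∀ k ∈ I, M i j ≠ M i k) with hBad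
  -- total count
  have htotal : (Finset.univ : Finset (Fin m' → Fin n → Fin q)).card = q ^ (m' * n) := by
    simp [mul_comm m' n, pow_mul]
  have hsplit : Good.card + Bad.card = q ^ (m' * n) := by
    rw [hGood, hBad, ← Finset.compl_filter, Finset.card_add_card_compl]
    simp [mul_comm m' n, pow_mul]
  -- per-row bad set
  -- Bad ⊆ union of products
  have hsub : Bad ⊆ Iᶜ.biUnion (fun j => Fintype.piFinset (fun _ : Fin m' => Rset q n I j)) := by
    intro M hM
    rw [hBad, Finset.mem_filter] at hM
    obtain ⟨-, hM⟩ := hM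
    push_neg at hM
    obtain ⟨j, hjI, hj⟩ := hM
    refine Finset.mem_biUnion.mpr ⟨j, Finset.mem_compl.mpr hjI, ?_⟩
    rw [Fintype.mem_piFinset]
    intro i
    obtain ⟨k, hk, hk'⟩ := hj i
    exact Finset.mem_filter.mpr ⟨Finset.mem_univ _, k, hk, hk'⟩
  -- per-row count bound in ℕ
  have hrowN : ∀ j ∉ I, (Rset q n I j).card + (q - 1) ^ d * q ^ (n - d) ≤ q ^ n := by
    intro j hj
    have hcompl : (Rset q n I j).card + (Rset q n I j)ᶜ.card = q ^ n := by
      rw [Finset.card_add_card_compl]; simp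
    have heq : (Rset q n I j)ᶜ
        = Finset.univ.filter (fun f : Fin n → Fin q => ∀ k ∈ I, f j ≠ f k) := by
      rw [Rset, Finset.compl_filter]
      apply Finset.filter_congr
      intro f _
      push_neg
      rfl
    have hs : I.card ≤ d := hI
    have h1 : (q - 1) ^ I.card * q ^ (n - 1 - I.card) * q
        = (q - 1) ^ I.card * q ^ (n - I.card) := by
      rw [mul_assoc, ← pow_succ]
      congr 2
      omega
    have h2 : (q - 1) ^ d * q ^ (n - d) ≤ (q - 1) ^ I.card * q ^ (n - I.card) := by
      have e1 : (q - 1) ^ d = (q - 1) ^ I.card * (q - 1) ^ (d - I.card) := by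
        rw [← pow_add]; congr 1; omega
      have e2 : q ^ (n - I.card) = q ^ (d - I.card) * q ^ (n - d) := by
        rw [← pow_add]; congr 1; omega
      rw [e1, e2]
      have h3 : (q - 1) ^ (d - I.card) ≤ q ^ (d - I.card) :=
        Nat.pow_le_pow_left (by omega) _
      calc (q-1)^I.card * (q-1)^(d-I.card) * q^(n-d)
          ≤ (q-1)^I.card * q^(d-I.card) * q^(n-d) := by
            exact Nat.mul_le_mul_right _ (Nat.mul_le_mul_left _ h3)
        _ = (q-1)^I.card * (q^(d-I.card) * q^(n-d)) := by ring
    have hsn : I.card ≤ n - 1 := by omega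
    have hlow := goodrow_lower q n hq1 I j hj hsn
    have hle : (q - 1) ^ d * q ^ (n - d) ≤
        (Finset.univ.filter (fun f : Fin n → Fin q => ∀ k ∈ I, f j ≠ f k)).card := by
      calc (q - 1) ^ d * q ^ (n - d) ≤ (q - 1) ^ I.card * q ^ (n - I.card) := h2
        _ = (q - 1) ^ I.card * q ^ (n - 1 - I.card) * q := h1.symm
        _ ≤ _ := hlow
    rw [heq] at hcompl
    calc (Rset q n I j).card + (q - 1) ^ d * q ^ (n - d)
        ≤ (Rset q n I j).card
          + (Finset.univ.filter (fun f : Fin n → Fin q => ∀ k ∈ I, f j ≠ f k)).card :=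
          Nat.add_le_add_left hle _
      _ = q ^ n := hcompl
  -- per-row bound in ℝ
  set p : ℝ := 1 - (1 - 1 / (q : ℝ)) ^ d with hp
  have hdn : d ≤ n := le_of_lt hn
  have hqsub : ((q - 1 : ℕ) : ℝ) = (q:ℝ) - 1 := by
    push_cast [hq1]; ring
  have hident : ((q:ℝ) - 1) ^ d * (q:ℝ) ^ (n - d) = (1 - 1/(q:ℝ))^d * (q:ℝ)^n := by
    have hqn : (q:ℝ) ^ n = (q:ℝ)^d * (q:ℝ)^(n-d) := by
      rw [← pow_add]; congr 1; omega
    have hb : (1 - 1/(q:ℝ)) = ((q:ℝ)-1)/(q:ℝ) := by field_simp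
    rw [hb, div_pow, hqn]
    field_simp
  have hrowR : ∀ j ∉ I, ((Rset q n I j).card : ℝ) ≤ p * (q:ℝ) ^ n := by
    intro j hj
    have h := hrowN j hj
    have : ((Rset q n I j).card : ℝ) + ((q:ℝ)-1)^d * (q:ℝ)^(n-d) ≤ (q:ℝ)^n := by
      have := h
      have hc : (((Rset q n I j).card + (q - 1) ^ d * q ^ (n - d) : ℕ) : ℝ) ≤ ((q ^ n : ℕ) : ℝ) := by
        exact_mod_cast this
      push_cast at hc
      rw [hqsub] at hc
      linarith
    rw [hident] at this
    rw [hp]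
    nlinarith [pow_pos hq0R n]
  -- positivity of p etc.
  have hq1R : (1 : ℝ) < q := by exact_mod_cast (by omega : 1 < q)
  have hbase0 : (0 : ℝ) < 1 - 1 / q := by
    rw [sub_pos, div_lt_one (by linarith)]; exact hq1R
  have hbase1 : 1 - 1 / (q : ℝ) < 1 := by
    have : (0:ℝ) < 1 / q := by positivity
    linarith
  have hp0 : 0 < p := by
    have := pow_lt_one₀ hbase0.le hbase1 (by omega : d ≠ 0)
    rw [hp]; linarith
  -- Bad card bound in ℕ then ℝ
  have hBadN : Bad.card ≤ ∑ j ∈ Iᶜ, (Rset q n I j).card ^ m' := by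
    calc Bad.card ≤ (Iᶜ.biUnion (fun j => Fintype.piFinset (fun _ : Fin m' => Rset q n I j))).card :=
          Finset.card_le_card hsub
      _ ≤ ∑ j ∈ Iᶜ, (Fintype.piFinset (fun _ : Fin m' => Rset q n I j)).card := Finset.card_biUnion_le
      _ = ∑ j ∈ Iᶜ, (Rset q n I j).card ^ m' := by
          apply Finset.sum_congr rfl
          intro j _
          rw [Fintype.card_piFinset]
          simp
  have hBadR : (Bad.card : ℝ) ≤ δ * (q:ℝ) ^ (m' * n) := by
    have hppos : (0:ℝ) ≤ p * (q:ℝ)^n := by positivity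
    have hstep : (Bad.card : ℝ) ≤ (n : ℝ) * (p * (q:ℝ)^n) ^ m' := by
      calc (Bad.card : ℝ) ≤ ((∑ j ∈ Iᶜ, (Rset q n I j).card ^ m' : ℕ) : ℝ) := by exact_mod_cast hBadN
        _ = ∑ j ∈ Iᶜ, ((Rset q n I j).card : ℝ) ^ m' := by push_cast; ring
        _ ≤ ∑ _j ∈ Iᶜ, (p * (q:ℝ)^n) ^ m' := by
            apply Finset.sum_le_sum
            intro j hj
            exact pow_le_pow_left₀ (Nat.cast_nonneg _) (hrowR j (Finset.mem_compl.mp hj)) m'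
        _ = (Iᶜ.card : ℝ) * (p * (q:ℝ)^n) ^ m' := by
            rw [Finset.sum_const, nsmul_eq_mul]
        _ ≤ (n : ℝ) * (p * (q:ℝ)^n) ^ m' := by
            apply mul_le_mul_of_nonneg_right _ (pow_nonneg hppos m')
            have : Iᶜ.card ≤ n := le_trans (Finset.card_le_card (Finset.subset_univ Iᶜ)) (by simp)
            exact_mod_cast this
    have hanalytic := analytic_step q d m' n hq hd hm' hn δ hδ hm
    rw [← hp] at hanalytic
    calc (Bad.card : ℝ) ≤ (n : ℝ) * (p * (q:ℝ)^n) ^ m' := hstep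
      _ = ((n:ℝ) * p ^ m') * (q:ℝ) ^ (m' * n) := by
          rw [mul_pow, ← pow_mul, mul_comm n m']
          ring
      _ ≤ δ * (q:ℝ) ^ (m' * n) := by
          apply mul_le_mul_of_nonneg_right hanalytic (by positivity)
  -- conclude
  have hcast : (Good.card : ℝ) + (Bad.card : ℝ) = (q:ℝ) ^ (m' * n) := by
    exact_mod_cast congrArg (Nat.cast : ℕ → ℝ) hsplit
  have hpow : (0:ℝ) < (q:ℝ) ^ (m' * n) := by positivity
  rw [ge_iff_le, le_div_iff₀ hpow]
  nlinarith

end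
end

section
/- Let q ≥ 2 and d ≥ 1 be integers, and let v₁, …, v_d be chosen independently and uniformly at random from [q] = {1,…,q}. Let Y = |{σ ∈ [q] : σ ∉ {v₁,…,v_d}}| be the number of symbols of [q] not appearing among v₁,…,v_d. Then P[ |Y − q(1−1/q)^d| ≥ q^{2/3} ] ≤ q^{−1/3}·(1−1/q)^d. -/
open scoped Classical
noncomputable section

lemma count_all_mem (q d : ℕ) (s : Finset (Fin q)) :
    (Finset.univ.filter (fun ω : Fin d → Fin q => ∀ i, ω i ∈ s)).card = s.card ^ d := by
  have h : (Finset.univ.filter (fun ω : Fin d → Fin q => ∀ i, ω i ∈ s))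
      = Fintype.piFinset (fun _ : Fin d => s) := by
    ext ω; simp [Fintype.mem_piFinset]
  rw [h, Fintype.card_piFinset]
  simp

theorem missing_symbols_concentration (q d : ℕ) (hq : 2 ≤ q) (hd : 1 ≤ d) :
    ((Finset.univ.filter (fun v : Fin d → Fin q =>
        |((Finset.univ.filter
            (fun σ : Fin q => σ ∉ Finset.image v Finset.univ)).card : ℝ) -
          (q : ℝ) * (1 - 1 / (q : ℝ)) ^ d| ≥ (q : ℝ) ^ ((2 : ℝ) / 3))).card : ℝ) /
      (q : ℝ) ^ d ≤
    (q : ℝ) ^ (-(1 : ℝ) / 3) * (1 - 1 / (q : ℝ)) ^ d := by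
  have hQ2 : (2:ℝ) ≤ (q:ℝ) := by exact_mod_cast hq
  have hQpos : (0:ℝ) < (q:ℝ) := by linarith
  set Q : ℝ := (q : ℝ) with hQdef
  set Y : (Fin d → Fin q) → ℝ := fun v =>
    ((Finset.univ.filter (fun σ : Fin q => σ ∉ Finset.image v Finset.univ)).card : ℝ) with hY
  set μ : ℝ := Q * (1 - 1 / Q) ^ d with hμ
  set t : ℝ := Q ^ ((2:ℝ)/3) with ht
  set E : ℝ := Q - 1 with hE
  set F : ℝ := Q - 2 with hF
  -- cast facts
  have hE' : ((q - 1 : ℕ) : ℝ) = E := by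
    rw [hE, Nat.cast_sub (by omega)]; norm_num; exact hQdef.symm
  have hF' : ((q - 2 : ℕ) : ℝ) = F := by
    rw [hF, Nat.cast_sub (by omega)]; norm_num; exact hQdef.symm
  have hone : (1 : ℝ) - 1 / Q = E / Q := by
    rw [hE]; field_simp
  -- counting lemmas
  have hcount1 : ∀ σ : Fin q,
      (Finset.univ.filter (fun v : Fin d → Fin q => σ ∉ Finset.image v Finset.univ)).card
        = (q - 1) ^ d := by
    intro σ
    have h := count_all_mem q d ({σ}ᶜ)
    have hc : ({σ}ᶜ : Finset (Fin q)).card = q - 1 := by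
      rw [Finset.card_compl]; simp
    rw [← hc, ← h]
    congr 1
    ext v
    simp [Finset.mem_image]
  have hcount2 : ∀ σ τ : Fin q, σ ≠ τ →
      (Finset.univ.filter (fun v : Fin d → Fin q =>
        σ ∉ Finset.image v Finset.univ ∧ τ ∉ Finset.image v Finset.univ)).card
        = (q - 2) ^ d := by
    intro σ τ hστ
    have h := count_all_mem q d (({σ, τ} : Finset (Fin q))ᶜ)
    have hc : (({σ, τ} : Finset (Fin q))ᶜ).card = q - 2 := by
      rw [Finset.card_compl, Finset.card_insert_of_notMem (by simpa using hστ)]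
      simp
    rw [← hc, ← h]
    congr 1
    ext v
    simp [Finset.mem_image, forall_and]
  -- indicator decomposition
  have hYsum : ∀ v, Y v = ∑ σ : Fin q,
      (if σ ∉ Finset.image v Finset.univ then (1:ℝ) else 0) := by
    intro v
    rw [hY]
    push_cast [Finset.card_filter]
    rfl
  -- first moment
  have hS1 : ∑ v : Fin d → Fin q, Y v = Q * E ^ d := by
    calc ∑ v : Fin d → Fin q, Y v
        = ∑ v : Fin d → Fin q, ∑ σ : Fin q,
            (if σ ∉ Finset.image v Finset.univ then (1:ℝ) else 0) :=
          Finset.sum_congr rfl fun v _ => hYsum v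
      _ = ∑ σ : Fin q, ∑ v : Fin d → Fin q,
            (if σ ∉ Finset.image v Finset.univ then (1:ℝ) else 0) := Finset.sum_comm
      _ = ∑ σ : Fin q, ((Finset.univ.filter (fun v : Fin d → Fin q =>
            σ ∉ Finset.image v Finset.univ)).card : ℝ) := by
          simp [Finset.sum_boole]
      _ = ∑ σ : Fin q, (((q - 1) ^ d : ℕ) : ℝ) := by
          refine Finset.sum_congr rfl fun σ _ => ?_
          rw [hcount1 σ]
      _ = Q * E ^ d := by
          rw [Finset.sum_const, Finset.card_univ, Fintype.card_fin, nsmul_eq_mul]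
          push_cast [hE']
          ring
  -- second moment
  have hS2 : ∑ v : Fin d → Fin q, (Y v) ^ 2 = Q * E ^ d + Q * E * F ^ d := by
    have hpt : ∀ (σ τ : Fin q) (v : Fin d → Fin q),
        (if σ ∉ Finset.image v Finset.univ then (1:ℝ) else 0) *
        (if τ ∉ Finset.image v Finset.univ then (1:ℝ) else 0)
        = (if σ ∉ Finset.image v Finset.univ ∧ τ ∉ Finset.image v Finset.univ
            then (1:ℝ) else 0) := by
      intro σ τ v
      by_cases h1 : σ ∉ Finset.image v Finset.univ <;>
        by_cases h2 : τ ∉ Finset.image v Finset.univ <;>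
        simp only [h1, h2, if_true, if_false, ite_true, ite_false, and_true, true_and,
          and_false, false_and, mul_one, mul_zero, one_mul, zero_mul, not_true, not_false_iff]
    have hCτ : ∀ σ : Fin q, ∑ τ : Fin q, ∑ v : Fin d → Fin q,
        (if σ ∉ Finset.image v Finset.univ ∧ τ ∉ Finset.image v Finset.univ
          then (1:ℝ) else 0) = E ^ d + E * F ^ d := by
      intro σ
      have hCval : ∀ τ : Fin q, ∑ v : Fin d → Fin q,
          (if σ ∉ Finset.image v Finset.univ ∧ τ ∉ Finset.image v Finset.univ
            then (1:ℝ) else 0)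
          = ((Finset.univ.filter (fun v : Fin d → Fin q =>
              σ ∉ Finset.image v Finset.univ ∧ τ ∉ Finset.image v Finset.univ)).card : ℝ) := by
        intro τ; simp [Finset.sum_boole]
      rw [← Finset.add_sum_erase _ _ (Finset.mem_univ σ)]
      have hdiag : ∑ v : Fin d → Fin q,
          (if σ ∉ Finset.image v Finset.univ ∧ σ ∉ Finset.image v Finset.univ
            then (1:ℝ) else 0) = E ^ d := by
        rw [hCval σ]
        have : (Finset.univ.filter (fun v : Fin d → Fin q =>
            σ ∉ Finset.image v Finset.univ ∧ σ ∉ Finset.image v Finset.univ))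
          = (Finset.univ.filter (fun v : Fin d → Fin q =>
            σ ∉ Finset.image v Finset.univ)) := by
          apply Finset.filter_congr; intro v _; simp
        rw [this, hcount1 σ]
        push_cast [hE']
        ring
      rw [hdiag]
      have hoff : ∀ τ ∈ Finset.univ.erase σ, ∑ v : Fin d → Fin q,
          (if σ ∉ Finset.image v Finset.univ ∧ τ ∉ Finset.image v Finset.univ
            then (1:ℝ) else 0) = F ^ d := by
        intro τ hτ
        rw [hCval τ, hcount2 σ τ (Finset.ne_of_mem_erase hτ).symm]
        push_cast [hF']
        ring
      rw [Finset.sum_congr rfl hoff, Finset.sum_const, Finset.card_erase_of_mem (Finset.mem_univ σ),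
        Finset.card_univ, Fintype.card_fin, nsmul_eq_mul]
      push_cast [hE']
      ring
    calc ∑ v : Fin d → Fin q, (Y v) ^ 2
        = ∑ v : Fin d → Fin q, ∑ σ : Fin q, ∑ τ : Fin q,
            ((if σ ∉ Finset.image v Finset.univ then (1:ℝ) else 0) *
             (if τ ∉ Finset.image v Finset.univ then (1:ℝ) else 0)) := by
          refine Finset.sum_congr rfl fun v _ => ?_
          rw [hYsum v, sq, Finset.sum_mul_sum]
      _ = ∑ σ : Fin q, ∑ τ : Fin q, ∑ v : Fin d → Fin q,
            ((if σ ∉ Finset.image v Finset.univ then (1:ℝ) else 0) *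
             (if τ ∉ Finset.image v Finset.univ then (1:ℝ) else 0)) := by
          rw [Finset.sum_comm]
          exact Finset.sum_congr rfl fun σ _ => Finset.sum_comm
      _ = ∑ σ : Fin q, (E ^ d + E * F ^ d) := by
          refine Finset.sum_congr rfl fun σ _ => ?_
          rw [← hCτ σ]
          exact Finset.sum_congr rfl fun τ _ => Finset.sum_congr rfl fun v _ => hpt σ τ v
      _ = Q * E ^ d + Q * E * F ^ d := by
          rw [Finset.sum_const, Finset.card_univ, Fintype.card_fin, nsmul_eq_mul]
          ring
  -- basic positivity
  have hQd : (0:ℝ) < Q ^ d := pow_pos hQpos d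
  have hEpos : (0:ℝ) ≤ E := by rw [hE]; linarith
  have hFpos : (0:ℝ) ≤ F := by rw [hF]; linarith
  -- μ * Q^d = Q * E^d
  have hμdef : μ * Q ^ d = Q * E ^ d := by
    rw [hμ, hone, div_pow]
    field_simp
  -- variance bound
  have hkey : Q * E * F ^ d * Q ^ d ≤ Q ^ 2 * (E ^ d) ^ 2 := by
    have hFQ : F * Q ≤ E ^ 2 := by rw [hE, hF]; nlinarith
    have h1 : F ^ d * Q ^ d ≤ (E ^ d) ^ 2 := by
      calc F ^ d * Q ^ d = (F * Q) ^ d := (mul_pow F Q d).symm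
        _ ≤ (E ^ 2) ^ d := pow_le_pow_left₀ (by positivity) hFQ d
        _ = (E ^ d) ^ 2 := by rw [← pow_mul, ← pow_mul, mul_comm]
    have h2 : Q * E ≤ Q ^ 2 := by nlinarith
    calc Q * E * F ^ d * Q ^ d = (Q * E) * (F ^ d * Q ^ d) := by ring
      _ ≤ Q ^ 2 * (E ^ d) ^ 2 := by
          apply mul_le_mul h2 h1 (by positivity) (by positivity)
  have hvar : ∑ v : Fin d → Fin q, (Y v - μ) ^ 2 ≤ Q * E ^ d := by
    have hexp : ∑ v : Fin d → Fin q, (Y v - μ) ^ 2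
        = (∑ v : Fin d → Fin q, (Y v) ^ 2) - 2 * μ * (∑ v : Fin d → Fin q, Y v)
          + Q ^ d * μ ^ 2 := by
      have h : ∀ v : Fin d → Fin q, (Y v - μ)^2 = (Y v)^2 - 2*μ*(Y v) + μ^2 := fun v => by ring
      rw [Finset.sum_congr rfl fun v _ => h v, Finset.sum_add_distrib, Finset.sum_sub_distrib,
        ← Finset.mul_sum, Finset.sum_const, Finset.card_univ, Fintype.card_fun, nsmul_eq_mul,
        Fintype.card_fin, Fintype.card_fin]
      push_cast
      ring
    rw [hexp, hS1, hS2]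
    have h1 : Q * E * F ^ d ≤ Q ^ d * μ ^ 2 := by
      have h2 : Q * E * F ^ d * Q ^ d ≤ (Q ^ d * μ ^ 2) * Q ^ d := by
        calc Q * E * F ^ d * Q ^ d ≤ Q ^ 2 * (E ^ d) ^ 2 := hkey
          _ = (Q * E ^ d) ^ 2 := by ring
          _ = (μ * Q ^ d) ^ 2 := by rw [hμdef]
          _ = (Q ^ d * μ ^ 2) * Q ^ d := by ring
      exact le_of_mul_le_mul_right h2 hQd
    have h4 : 2 * μ * (Q * E ^ d) = 2 * (Q ^ d * μ ^ 2) := by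
      rw [← hμdef]; ring
    linarith
  -- Chebyshev
  set A := Finset.univ.filter (fun v : Fin d → Fin q => |Y v - μ| ≥ t) with hA
  have ht0 : (0:ℝ) ≤ t := Real.rpow_nonneg (le_of_lt hQpos) _
  have hcheb : (A.card : ℝ) * t ^ 2 ≤ ∑ v : Fin d → Fin q, (Y v - μ) ^ 2 := by
    have h1 : (A.card : ℝ) * t ^ 2 = ∑ _v ∈ A, t ^ 2 := by
      rw [Finset.sum_const, nsmul_eq_mul]
    rw [h1]
    refine le_trans (Finset.sum_le_sum ?_)
      (Finset.sum_le_sum_of_subset_of_nonneg (Finset.subset_univ A)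
        (fun v _ _ => sq_nonneg _))
    intro v hv
    have hv2 : t ≤ |Y v - μ| := (Finset.mem_filter.mp hv).2
    calc t ^ 2 ≤ |Y v - μ| ^ 2 := pow_le_pow_left₀ ht0 hv2 2
      _ = (Y v - μ) ^ 2 := sq_abs _
  -- final arithmetic
  have hrt : Q ^ (-(1:ℝ)/3) * t ^ 2 = Q := by
    have ht2 : t ^ 2 = Q ^ ((4:ℝ)/3) := by
      rw [ht, sq, ← Real.rpow_add hQpos]; norm_num
    rw [ht2, ← Real.rpow_add hQpos]
    norm_num
  have ht2pos : (0:ℝ) < t ^ 2 := by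
    have : (0:ℝ) < t := Real.rpow_pos_of_pos hQpos _
    positivity
  show (A.card : ℝ) / Q ^ d ≤ Q ^ (-(1:ℝ)/3) * (1 - 1/Q) ^ d
  rw [div_le_iff₀ hQd]
  have hmain : (A.card : ℝ) * t ^ 2 ≤ (Q ^ (-(1:ℝ)/3) * (1 - 1/Q) ^ d * Q ^ d) * t ^ 2 := by
    have h5 : (Q ^ (-(1:ℝ)/3) * (1 - 1/Q) ^ d * Q ^ d) * t ^ 2
        = (Q ^ (-(1:ℝ)/3) * t ^ 2) * ((1 - 1/Q) ^ d * Q ^ d) := by ring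
    calc (A.card : ℝ) * t ^ 2 ≤ ∑ v : Fin d → Fin q, (Y v - μ) ^ 2 := hcheb
      _ ≤ Q * E ^ d := hvar
      _ = μ * Q ^ d := hμdef.symm
      _ = (Q ^ (-(1:ℝ)/3) * (1 - 1/Q) ^ d * Q ^ d) * t ^ 2 := by
          rw [h5, hrt, hμ]; ring
  exact le_of_mul_le_mul_right hmain ht2pos

end
end

section
/- Let q and d be integers with q ≥ d ≥ 1, and let v₁, …, v_d be chosen independently and uniformly at random from [q] = {1,…,q}. Then the probability that the number of distinct symbols |{v₁,…,v_d}| is at most d/4 is at most 2^{−d}. -/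
open scoped Classical

noncomputable section

-- k^k ≤ 4^k * k!  (real version by exp, then cast)
lemma pow_self_le_real (k : ℕ) : (k : ℝ) ^ k ≤ 4 ^ k * (Nat.factorial k : ℝ) := by
  induction k with
  | zero => simp
  | succ k ih =>
    rcases Nat.eq_zero_or_pos k with hk | hk
    · subst hk; norm_num
    have hk0 : (0:ℝ) < k := by exact_mod_cast hk
    have h1 : ((k:ℝ) + 1) ^ k ≤ 4 * (k:ℝ) ^ k := by
      have h2 : (k:ℝ) + 1 ≤ Real.exp (1 / k) * k := by
        have := Real.add_one_le_exp (1 / (k:ℝ))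
        calc (k:ℝ) + 1 = (1/(k:ℝ) + 1) * k := by field_simp; ring
          _ ≤ Real.exp (1/k) * k := by
              apply mul_le_mul_of_nonneg_right this hk0.le
      calc ((k:ℝ) + 1) ^ k ≤ (Real.exp (1/k) * k) ^ k := by
            apply pow_le_pow_left₀ (by positivity) h2
        _ = Real.exp (1/k) ^ k * (k:ℝ)^k := mul_pow _ _ _
        _ = Real.exp 1 * (k:ℝ)^k := by
            rw [← Real.exp_nat_mul]
            congr 1
            field_simp
        _ ≤ 4 * (k:ℝ)^k := by
            apply mul_le_mul_of_nonneg_right _ (by positivity)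
            have := Real.exp_one_lt_d9
            linarith
    push_cast [Nat.factorial_succ]
    calc ((k:ℝ)+1) ^ (k+1) = ((k:ℝ)+1) * ((k:ℝ)+1)^k := by ring
      _ ≤ ((k:ℝ)+1) * (4 * (k:ℝ)^k) := by
          apply mul_le_mul_of_nonneg_left h1 (by positivity)
      _ ≤ ((k:ℝ)+1) * (4 * (4^k * (Nat.factorial k : ℝ))) := by
          apply mul_le_mul_of_nonneg_left _ (by positivity)
          apply mul_le_mul_of_nonneg_left ih (by norm_num)
      _ = 4 ^ (k+1) * ((↑k + 1) * (Nat.factorial k : ℝ)) := by ring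

lemma pow_self_le (k : ℕ) : k ^ k ≤ 4 ^ k * Nat.factorial k := by
  have := pow_self_le_real k
  exact_mod_cast this

-- key nat inequality
lemma key_ineq (q d k : ℕ) (h4 : 4 * k ≤ d) (hdq : d ≤ q) (hd : 1 ≤ d) :
    Nat.choose q k * k ^ d * 2 ^ d ≤ q ^ d := by
  rcases Nat.eq_zero_or_pos k with hk | hk
  · subst hk
    rw [Nat.zero_pow hd]
    simp
  set m := d - k with hm
  have hdkm : d = k + m := by omega
  have hm3 : 3 * k ≤ m := by omega
  have hkk : 0 < k ^ k := Nat.pow_pos hk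
  apply Nat.le_of_mul_le_mul_right _ hkk
  have hA : Nat.choose q k * k ^ k ≤ 4 ^ k * q ^ k := by
    calc Nat.choose q k * k ^ k ≤ Nat.choose q k * (4 ^ k * Nat.factorial k) :=
          Nat.mul_le_mul_left _ (pow_self_le k)
      _ = 4 ^ k * (Nat.factorial k * Nat.choose q k) := by ring
      _ = 4 ^ k * q.descFactorial k := by rw [Nat.descFactorial_eq_factorial_mul_choose]
      _ ≤ 4 ^ k * q ^ k := Nat.mul_le_mul_left _ (Nat.descFactorial_le_pow _ _)
  have hB : 4 ^ k * (k ^ m * 2 ^ d) ≤ q ^ m := by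
    have h2d : (2:ℕ) ^ d = 2 ^ k * 2 ^ m := by rw [hdkm, pow_add]
    have h48 : (4:ℕ)^k * 2^k = 8^k := by rw [← Nat.mul_pow]
    have h2km : (2:ℕ)^m * k^m = (2*k)^m := (Nat.mul_pow _ _ _).symm
    have h8 : (8:ℕ) ^ k ≤ 2 ^ m := by
      calc (8:ℕ)^k = 2 ^ (3*k) := by rw [pow_mul]; norm_num
        _ ≤ 2 ^ m := Nat.pow_le_pow_right (by norm_num) hm3
    calc 4 ^ k * (k ^ m * 2 ^ d) = (4^k * 2^k) * (2^m * k^m) := by rw [h2d]; ring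
      _ = 8^k * (2*k)^m := by rw [h48, h2km]
      _ ≤ 2^m * (2*k)^m := Nat.mul_le_mul_right _ h8
      _ = (2*(2*k))^m := (Nat.mul_pow _ _ _).symm
      _ ≤ q^m := Nat.pow_le_pow_left (by omega) _
  calc Nat.choose q k * k ^ d * 2 ^ d * k ^ k
      = (Nat.choose q k * k ^ k) * (k ^ d * 2 ^ d) := by ring
    _ ≤ (4 ^ k * q ^ k) * (k ^ d * 2 ^ d) := Nat.mul_le_mul_right _ hA
    _ = (q ^ k * k ^ k) * (4 ^ k * (k ^ m * 2 ^ d)) := by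
        rw [hdkm, pow_add]; ring
    _ ≤ (q ^ k * k ^ k) * q ^ m := Nat.mul_le_mul_left _ hB
    _ = q ^ d * k ^ k := by rw [hdkm, pow_add]; ring

theorem few_distinct_symbols_probability (q d : ℕ) (hqd : d ≤ q) (hd : 1 ≤ d) :
    ((Finset.univ.filter (fun v : Fin d → Fin q =>
        ((Finset.image v Finset.univ).card : ℝ) ≤ (d : ℝ) / 4)).card : ℝ) /
      (q : ℝ) ^ d ≤ 1 / (2 : ℝ) ^ d := by
  set k := d / 4 with hk
  have hkq : k ≤ q := le_trans (Nat.div_le_self _ _) hqd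
  have hcond : ∀ v : Fin d → Fin q,
      (((Finset.image v Finset.univ).card : ℝ) ≤ (d : ℝ) / 4) ↔
      (Finset.image v Finset.univ).card ≤ k := by
    intro v
    rw [le_div_iff₀ (by norm_num : (0:ℝ) < 4),
      show ((4:ℝ) = ((4:ℕ):ℝ)) by norm_num, ← Nat.cast_mul, Nat.cast_le]
    omega
  have hsub : (Finset.univ.filter (fun v : Fin d → Fin q =>
        ((Finset.image v Finset.univ).card : ℝ) ≤ (d : ℝ) / 4)) ⊆
      (Finset.powersetCard k (Finset.univ : Finset (Fin q))).biUnion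
        (fun S => Fintype.piFinset (fun _ : Fin d => S)) := by
    intro v hv
    rw [Finset.mem_filter] at hv
    have hcard : (Finset.image v Finset.univ).card ≤ k := (hcond v).1 hv.2
    obtain ⟨S, hS1, hS2, hS3⟩ := Finset.exists_subsuperset_card_eq
      (Finset.subset_univ (Finset.image v Finset.univ)) hcard (by simpa using hkq)
    rw [Finset.mem_biUnion]
    refine ⟨S, ?_, ?_⟩
    · rw [Finset.mem_powersetCard]
      exact ⟨Finset.subset_univ _, hS3⟩
    · rw [Fintype.mem_piFinset]
      intro i
      exact hS1 (Finset.mem_image_of_mem v (Finset.mem_univ i))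
  have hcount : (Finset.univ.filter (fun v : Fin d → Fin q =>
        ((Finset.image v Finset.univ).card : ℝ) ≤ (d : ℝ) / 4)).card ≤
      Nat.choose q k * k ^ d := by
    calc _ ≤ ((Finset.powersetCard k (Finset.univ : Finset (Fin q))).biUnion
          (fun S => Fintype.piFinset (fun _ : Fin d => S))).card := Finset.card_le_card hsub
      _ ≤ ∑ S ∈ Finset.powersetCard k (Finset.univ : Finset (Fin q)),
          (Fintype.piFinset (fun _ : Fin d => S)).card := Finset.card_biUnion_le
      _ = ∑ S ∈ Finset.powersetCard k (Finset.univ : Finset (Fin q)), S.card ^ d := by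
          apply Finset.sum_congr rfl
          intro S _
          rw [Fintype.card_piFinset_const]
      _ = ∑ S ∈ Finset.powersetCard k (Finset.univ : Finset (Fin q)), k ^ d := by
          apply Finset.sum_congr rfl
          intro S hS
          rw [(Finset.mem_powersetCard.1 hS).2]
      _ = Nat.choose q k * k ^ d := by
          rw [Finset.sum_const, smul_eq_mul, Finset.card_powersetCard, Finset.card_univ,
            Fintype.card_fin]
  have hkey : Nat.choose q k * k ^ d * 2 ^ d ≤ q ^ d :=
    key_ineq q d k (by omega) hqd hd
  have hnat : (Finset.univ.filter (fun v : Fin d → Fin q =>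
        ((Finset.image v Finset.univ).card : ℝ) ≤ (d : ℝ) / 4)).card * 2 ^ d ≤ q ^ d := by
    calc _ ≤ Nat.choose q k * k ^ d * 2 ^ d := Nat.mul_le_mul_right _ hcount
      _ ≤ q ^ d := hkey
  have hq1 : 1 ≤ q := le_trans hd hqd
  have hqpos : (0:ℝ) < (q:ℝ) ^ d := by positivity
  rw [div_le_div_iff₀ hqpos (by positivity)]
  have : ((Finset.univ.filter (fun v : Fin d → Fin q =>
        ((Finset.image v Finset.univ).card : ℝ) ≤ (d : ℝ) / 4)).card : ℝ) * 2 ^ d ≤ (q:ℝ) ^ d := by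
    exact_mod_cast hnat
  linarith

end
end
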